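/- arXiv:1511.07674 — 6 statements merged into one kernel-verified Lean document; each statement's English description precedes it below -/
import Mathlib

section
/- The map P ↦ (-1)^(dim P) · 𝟙[0 ∈ relint P] is a valuation on the set of convex polytopes in ℝⁿ containing the origin: if P, Q, and P ∪ Q are convex polytopes containing 0 (with P ∪ Q convex), then Φ(P) + Φ(Q) = Φ(P ∪ Q) + Φ(P ∩ Q). -/
open MeasureTheory Classical

/-- A convex polytope in `ℝⁿ`: the convex hull of a nonempty finite set of points. -/
def IsPolytope {n : ℕ} (P : Set (Fin n → ℝ)) : Prop :=
  ∃ S : Finset (Fin n → ℝ), S.Nonempty ∧ P = convexHull ℝ (S : Set (Fin n → ℝ))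

/-- The dimension of a polytope: the dimension of its affine hull. -/
noncomputable def pdim {n : ℕ} (P : Set (Fin n → ℝ)) : ℕ :=
  Module.finrank ℝ (affineSpan ℝ P).direction

/-- `Φ(P) = (-1)^(dim P) · 𝟙[0 ∈ relint P]`. -/
noncomputable def Phi {n : ℕ} (P : Set (Fin n → ℝ)) : ℝ :=
  if (0 : Fin n → ℝ) ∈ intrinsicInterior ℝ P then (-1 : ℝ) ^ pdim P else 0


set_option linter.unusedSectionVars false
set_option linter.unusedVariables false
set_option maxHeartbeats 1000000

open Set Submodule Module

section ConeDevelopment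

variable {E : Type*} [NormedAddCommGroup E] [NormedSpace ℝ E] [FiniteDimensional ℝ E]


def scone (P : Set E) : Set E := {x | ∃ ε : ℝ, 0 < ε ∧ ε • x ∈ P}

def coneOf (S : Finset E) : Set E :=
  {x | ∃ l : E → ℝ, (∀ s ∈ S, 0 ≤ l s) ∧ x = ∑ s ∈ S, l s • s}

lemma coneOf_mono {S T : Finset E} (h : S ⊆ T) : coneOf S ⊆ coneOf T := by
  rintro x ⟨l, hl0, rfl⟩
  classical
  refine ⟨fun v => if v ∈ S then l v else 0, fun s _ => ?_, ?_⟩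
  · dsimp only; split <;> simp [hl0, *]
  · rw [← Finset.sum_subset h (fun v _ hv => by simp [hv])]
    apply Finset.sum_congr rfl
    intro v hv
    simp [hv]

noncomputable def combMap (ι : Type*) [Fintype ι] (v : ι → E) : (ι → ℝ) →ₗ[ℝ] E where
  toFun l := ∑ i, l i • v i
  map_add' := by intros; simp [add_smul, Finset.sum_add_distrib]
  map_smul' := by intros; simp [Finset.smul_sum, smul_smul]

lemma isClosed_coneOf_indep (T : Finset E)
    (h : LinearIndependent ℝ (fun i : ↥T => (i : E))) : IsClosed (coneOf T) := by
  classical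
  have hK : IsClosed {l : ↥T → ℝ | ∀ i, 0 ≤ l i} := by
    have : {l : ↥T → ℝ | ∀ i, 0 ≤ l i} = ⋂ i, {l | 0 ≤ l i} := by ext; simp
    rw [this]
    exact isClosed_iInter (fun i => isClosed_le continuous_const (continuous_apply i))
  set f := combMap (↥T) (fun i : ↥T => (i : E)) with hf
  have hker : LinearMap.ker f = ⊥ := by
    rw [LinearMap.ker_eq_bot']
    intro m hm
    exact funext (Fintype.linearIndependent_iff.mp h m hm)
  have hce := LinearMap.isClosedEmbedding_of_injective hker
  have himg : coneOf T = f '' {l : ↥T → ℝ | ∀ i, 0 ≤ l i} := by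
    ext x
    constructor
    · rintro ⟨l, hl0, rfl⟩
      refine ⟨fun i => l i, fun i => hl0 _ i.2, ?_⟩
      show ∑ i : ↥T, l i • (i : E) = _
      rw [Finset.univ_eq_attach, Finset.sum_attach T (fun s => l s • s)]
    · rintro ⟨l, hl0, rfl⟩
      refine ⟨fun v => if hv : v ∈ T then l ⟨v, hv⟩ else 0, fun s hs => by simp only [dif_pos hs]; exact hl0 ⟨s, hs⟩, ?_⟩
      show _ = ∑ s ∈ T, (if hs : s ∈ T then l ⟨s, hs⟩ else 0) • s
      rw [← Finset.sum_attach T (fun s => (if hs : s ∈ T then l ⟨s, hs⟩ else 0) • s)]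
      show ∑ i : ↥T, l i • (i : E) = _
      rw [Finset.univ_eq_attach]
      apply Finset.sum_congr rfl
      intro i _
      simp
  rw [himg]
  exact hce.isClosedMap _ hK

lemma exists_indep_rep :
    ∀ (N : ℕ) (S : Finset E), S.card ≤ N → ∀ x ∈ coneOf S,
      ∃ T : Finset E, T ⊆ S ∧ LinearIndependent ℝ (fun i : ↥T => (i : E)) ∧ x ∈ coneOf T := by
  classical
  intro N
  induction N with
  | zero =>
    intro S hS x hx
    rw [Nat.le_zero, Finset.card_eq_zero] at hS
    subst hS
    refine ⟨∅, Finset.Subset.refl _, ?_, hx⟩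
    have : IsEmpty (↥(∅ : Finset E)) := ⟨fun x => by rcases x with ⟨_, h⟩; simp at h⟩
    exact linearIndependent_empty_type
  | succ N ih =>
    intro S hS x hx
    obtain ⟨l, hl0, rfl⟩ := hx
    -- step: if some coefficient vanishes, erase that generator and recurse
    have hstep : ∀ (l : E → ℝ) (s₀ : E), s₀ ∈ S → (∀ s ∈ S, 0 ≤ l s) → l s₀ = 0 →
        ∃ T : Finset E, T ⊆ S ∧ LinearIndependent ℝ (fun i : ↥T => (i : E)) ∧
          (∑ s ∈ S, l s • s) ∈ coneOf T := by
      intro l s₀ hs₀ hl0 hz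
      have hsum : ∑ s ∈ S.erase s₀, l s • s = ∑ s ∈ S, l s • s :=
        Finset.sum_erase _ (by rw [hz, zero_smul])
      have hcard : (S.erase s₀).card ≤ N := by
        rw [Finset.card_erase_of_mem hs₀]
        omega
      obtain ⟨T, hTsub, hTind, hxT⟩ := ih (S.erase s₀) hcard _
        ⟨l, fun s hs => hl0 s (Finset.mem_of_mem_erase hs), hsum.symm⟩
      exact ⟨T, hTsub.trans (Finset.erase_subset _ _), hTind, hxT⟩
    by_cases hz : ∃ s₀ ∈ S, l s₀ = 0
    · obtain ⟨s₀, hs₀, hz⟩ := hz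
      exact hstep l s₀ hs₀ hl0 hz
    · by_cases hind : LinearIndependent ℝ (fun i : ↥S => (i : E))
      · exact ⟨S, Finset.Subset.refl _, hind, ⟨l, hl0, rfl⟩⟩
      · -- get a nontrivial relation with some positive coefficient
        obtain ⟨g, hgsum, i₀, hgi₀⟩ := Fintype.not_linearIndependent_iff.mp hind
        -- turn it into c : E → ℝ
        obtain ⟨c, hcsum, hcpos⟩ :
            ∃ c : E → ℝ, (∑ s ∈ S, c s • s) = 0 ∧ ∃ s ∈ S, 0 < c s := by
          rcases lt_or_gt_of_ne hgi₀ with hneg | hpos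
          · refine ⟨fun v => if hv : v ∈ S then -g ⟨v, hv⟩ else 0, ?_, ?_⟩
            · rw [← Finset.sum_attach S (fun s => (if hs : s ∈ S then -g ⟨s, hs⟩ else 0) • s)]
              have : ∀ i ∈ S.attach, (if hs : (i:E) ∈ S then -g ⟨i, hs⟩ else 0) • (i:E)
                  = -(g i • (i:E)) := by intro i _; simp [i.2]
              rw [Finset.sum_congr rfl this, Finset.sum_neg_distrib,
                ← Finset.univ_eq_attach, hgsum, neg_zero]
            · exact ⟨i₀, i₀.2, by simp [i₀.2]; linarith⟩
          · refine ⟨fun v => if hv : v ∈ S then g ⟨v, hv⟩ else 0, ?_, ?_⟩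
            · rw [← Finset.sum_attach S (fun s => (if hs : s ∈ S then g ⟨s, hs⟩ else 0) • s)]
              have : ∀ i ∈ S.attach, (if hs : (i:E) ∈ S then g ⟨i, hs⟩ else 0) • (i:E)
                  = g i • (i:E) := by intro i _; simp [i.2]
              rw [Finset.sum_congr rfl this, ← Finset.univ_eq_attach, hgsum]
            · exact ⟨i₀, i₀.2, by simp [i₀.2, hpos]⟩
        -- minimize l s / c s over positive c s
        have hFne : (S.filter (fun s => 0 < c s)).Nonempty := by
          obtain ⟨s, hs, hcs⟩ := hcpos
          exact ⟨s, Finset.mem_filter.mpr ⟨hs, hcs⟩⟩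
        obtain ⟨s₀, hs₀F, hmin⟩ := Finset.exists_min_image _ (fun s => l s / c s) hFne
        obtain ⟨hs₀S, hcs₀⟩ := Finset.mem_filter.mp hs₀F
        set α := l s₀ / c s₀ with hα
        have hl'0 : ∀ s ∈ S, 0 ≤ l s - α * c s := by
          intro s hs
          rcases le_or_gt (c s) 0 with hcs | hcs
          · have : 0 ≤ α := div_nonneg (hl0 s₀ hs₀S) hcs₀.le
            nlinarith [hl0 s hs]
          · have := hmin s (Finset.mem_filter.mpr ⟨hs, hcs⟩)
            rw [hα] at this ⊢
            rw [sub_nonneg]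
            calc l s₀ / c s₀ * c s ≤ l s / c s * c s := by
                  apply mul_le_mul_of_nonneg_right this hcs.le
              _ = l s := div_mul_cancel₀ _ hcs.ne'
        have hl'sum : ∑ s ∈ S, (l s - α * c s) • s = ∑ s ∈ S, l s • s := by
          have : ∀ s ∈ S, (l s - α * c s) • s = l s • s - α • (c s • s) := by
            intro s _
            rw [sub_smul, smul_smul]
          rw [Finset.sum_congr rfl this, Finset.sum_sub_distrib, ← Finset.smul_sum, hcsum,
            smul_zero, sub_zero]
        have hz₀ : l s₀ - α * c s₀ = 0 := by
          rw [hα, div_mul_cancel₀ _ hcs₀.ne', sub_self]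
        obtain ⟨T, h1, h2, h3⟩ := hstep (fun s => l s - α * c s) s₀ hs₀S hl'0 hz₀
        rw [hl'sum] at h3
        exact ⟨T, h1, h2, h3⟩

lemma isClosed_coneOf (S : Finset E) : IsClosed (coneOf S) := by
  classical
  have : coneOf S = ⋃ T ∈ {T : Finset E | T ⊆ S ∧ LinearIndependent ℝ (fun i : ↥T => (i : E))},
      coneOf T := by
    apply subset_antisymm
    · intro x hx
      obtain ⟨T, h1, h2, h3⟩ := exists_indep_rep S.card S le_rfl x hx
      exact mem_biUnion ⟨h1, h2⟩ h3
    · refine iUnion₂_subset fun T hT => coneOf_mono hT.1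
  rw [this]
  refine Set.Finite.isClosed_biUnion ?_ (fun T hT => isClosed_coneOf_indep T hT.2)
  exact Set.Finite.subset S.powerset.finite_toSet (fun T hT => Finset.mem_powerset.mpr hT.1)

lemma zero_mem_coneOf (S : Finset E) : (0 : E) ∈ coneOf S :=
  ⟨0, by simp, by simp⟩

lemma add_mem_coneOf {S : Finset E} {x y : E} (hx : x ∈ coneOf S) (hy : y ∈ coneOf S) :
    x + y ∈ coneOf S := by
  obtain ⟨l, hl, rfl⟩ := hx
  obtain ⟨m, hm, rfl⟩ := hy
  refine ⟨fun v => l v + m v, fun s hs => add_nonneg (hl s hs) (hm s hs), ?_⟩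
  rw [← Finset.sum_add_distrib]
  apply Finset.sum_congr rfl
  intro s _
  rw [add_smul]

lemma smul_mem_coneOf {S : Finset E} {x : E} {t : ℝ} (ht : 0 ≤ t) (hx : x ∈ coneOf S) :
    t • x ∈ coneOf S := by
  obtain ⟨l, hl, rfl⟩ := hx
  refine ⟨fun v => t * l v, fun s hs => mul_nonneg ht (hl s hs), ?_⟩
  rw [Finset.smul_sum]
  apply Finset.sum_congr rfl
  intro s _
  rw [smul_smul]

lemma convex_coneOf (S : Finset E) : Convex ℝ (coneOf S) := by
  intro x hx y hy a b ha hb _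
  exact add_mem_coneOf (smul_mem_coneOf ha hx) (smul_mem_coneOf hb hy)

lemma subset_scone (P : Set E) : P ⊆ scone P := fun x hx => ⟨1, one_pos, by simpa⟩

lemma zero_mem_scone {P : Set E} (h0 : (0:E) ∈ P) : (0:E) ∈ scone P := subset_scone P h0

/-- downward closedness of the scaling parameter, for convex sets containing `0` -/
lemma smul_mem_of_convex {P : Set E} (hP : Convex ℝ P) (h0 : (0:E) ∈ P) {x : E} (hx : x ∈ P)
    {δ : ℝ} (h0δ : 0 ≤ δ) (hδ1 : δ ≤ 1) : δ • x ∈ P := by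
  have := hP hx h0 h0δ (by linarith : (0:ℝ) ≤ 1 - δ) (by ring)
  simpa using this

lemma scone_inter {P Q : Set E} (hP : Convex ℝ P) (hQ : Convex ℝ Q)
    (h0P : (0:E) ∈ P) (h0Q : (0:E) ∈ Q) : scone (P ∩ Q) = scone P ∩ scone Q := by
  ext x
  constructor
  · rintro ⟨ε, hε, hεx⟩
    exact ⟨⟨ε, hε, hεx.1⟩, ⟨ε, hε, hεx.2⟩⟩
  · rintro ⟨⟨ε, hε, hεx⟩, ⟨δ, hδ, hδx⟩⟩
    refine ⟨min ε δ, lt_min hε hδ, ?_, ?_⟩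
    · have : min ε δ • x = ((min ε δ) / ε) • (ε • x) := by
        rw [smul_smul, div_mul_cancel₀ _ hε.ne']
      rw [this]
      exact smul_mem_of_convex hP h0P hεx (div_nonneg (lt_min hε hδ).le hε.le)
        (div_le_one_of_le₀ (min_le_left _ _) hε.le)
    · have : min ε δ • x = ((min ε δ) / δ) • (δ • x) := by
        rw [smul_smul, div_mul_cancel₀ _ hδ.ne']
      rw [this]
      exact smul_mem_of_convex hQ h0Q hδx (div_nonneg (lt_min hε hδ).le hδ.le)
        (div_le_one_of_le₀ (min_le_right _ _) hδ.le)

lemma scone_union (P Q : Set E) : scone (P ∪ Q) = scone P ∪ scone Q := by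
  ext x
  constructor
  · rintro ⟨ε, hε, hεx | hεx⟩
    · exact Or.inl ⟨ε, hε, hεx⟩
    · exact Or.inr ⟨ε, hε, hεx⟩
  · rintro (⟨ε, hε, hεx⟩ | ⟨ε, hε, hεx⟩)
    · exact ⟨ε, hε, Or.inl hεx⟩
    · exact ⟨ε, hε, Or.inr hεx⟩

lemma scone_subset_span (P : Set E) : scone P ⊆ ↑(span ℝ P) := by
  rintro x ⟨ε, hε, hεx⟩
  have : x = ε⁻¹ • (ε • x) := by rw [smul_smul, inv_mul_cancel₀ hε.ne', one_smul]
  rw [this]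
  exact Submodule.smul_mem _ _ (Submodule.subset_span hεx)

lemma span_scone (P : Set E) : span ℝ (scone P) = span ℝ P := by
  apply le_antisymm
  · rw [Submodule.span_le]
    exact scone_subset_span P
  · exact Submodule.span_mono (subset_scone P)

lemma scone_convexHull (S : Finset E) (h0 : (0:E) ∈ convexHull ℝ (S : Set E)) :
    scone (convexHull ℝ (S : Set E)) = coneOf S := by
  classical
  ext x
  constructor
  · rintro ⟨ε, hε, hεx⟩
    rw [Finset.convexHull_eq] at hεx
    obtain ⟨w, hw0, hw1, hwx⟩ := hεx
    rw [Finset.centerMass, hw1, inv_one, one_smul] at hwx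
    simp only [id] at hwx
    refine ⟨fun v => w v / ε, fun s hs => div_nonneg (hw0 s hs) hε.le, ?_⟩
    have : ∑ s ∈ S, (w s / ε) • s = ε⁻¹ • ∑ s ∈ S, w s • s := by
      rw [Finset.smul_sum]
      exact Finset.sum_congr rfl (fun s _ => by rw [smul_smul, div_eq_inv_mul])
    rw [this, hwx]
    simp [smul_smul, inv_mul_cancel₀ hε.ne']
  · rintro ⟨l, hl0, rfl⟩
    -- 0 has a representation as convex combination
    rw [Finset.convexHull_eq] at h0
    obtain ⟨w0, hw00, hw01, hw0x⟩ := h0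
    rw [Finset.centerMass, hw01, inv_one, one_smul] at hw0x
    simp only [id] at hw0x
    set c := ∑ s ∈ S, l s
    have hc0 : 0 ≤ c := Finset.sum_nonneg hl0
    set ε := (c + 1)⁻¹
    have hε : 0 < ε := by positivity
    refine ⟨ε, hε, ?_⟩
    rw [Finset.convexHull_eq]
    refine ⟨fun v => ε * l v + (1 - ε * c) * w0 v, fun s hs => ?_, ?_, ?_⟩
    · have h1 : ε * c ≤ 1 := by
        rw [← div_eq_inv_mul]
        apply div_le_one_of_le₀ (by linarith) (by linarith)
      exact add_nonneg (mul_nonneg hε.le (hl0 s hs))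
        (mul_nonneg (by linarith) (hw00 s hs))
    · rw [Finset.sum_add_distrib, ← Finset.mul_sum, ← Finset.mul_sum, hw01]
      ring
    · rw [Finset.centerMass]
      rw [Finset.sum_add_distrib, ← Finset.mul_sum, ← Finset.mul_sum, hw01, mul_one]
      have : ∑ i ∈ S, (ε * l i + (1 - ε * c) * w0 i) • id i
          = ε • (∑ s ∈ S, l s • s) + (1 - ε * c) • (∑ s ∈ S, w0 s • s) := by
        rw [Finset.smul_sum, Finset.smul_sum, ← Finset.sum_add_distrib]
        refine Finset.sum_congr rfl (fun s _ => ?_)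
        simp [add_smul, smul_smul]
      rw [this, hw0x, smul_zero, add_zero]
      have hc : ∑ i ∈ S, l i = c := rfl
      rw [hc, show ε * c + (1 - ε * c) = 1 by ring, inv_one, one_smul]


lemma convex_scone {P : Set E} (hP : Convex ℝ P) (h0 : (0:E) ∈ P) : Convex ℝ (scone P) := by
  rintro x ⟨ε, hε, hεx⟩ y ⟨δ, hδ, hδy⟩ a b ha hb hab
  refine ⟨min ε δ, lt_min hε hδ, ?_⟩
  have hx' : (min ε δ) • x ∈ P := by
    have hrw : (min ε δ) • x = ((min ε δ)/ε) • (ε • x) := by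
      rw [smul_smul, div_mul_cancel₀ _ hε.ne']
    rw [hrw]
    exact smul_mem_of_convex hP h0 hεx (div_nonneg (lt_min hε hδ).le hε.le)
      (div_le_one_of_le₀ (min_le_left _ _) hε.le)
  have hy' : (min ε δ) • y ∈ P := by
    have hrw : (min ε δ) • y = ((min ε δ)/δ) • (δ • y) := by
      rw [smul_smul, div_mul_cancel₀ _ hδ.ne']
    rw [hrw]
    exact smul_mem_of_convex hP h0 hδy (div_nonneg (lt_min hε hδ).le hδ.le)
      (div_le_one_of_le₀ (min_le_right _ _) hδ.le)
  have hrw : (min ε δ) • (a • x + b • y) = a • ((min ε δ) • x) + b • ((min ε δ) • y) := by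
    rw [smul_add, smul_comm, smul_comm (min ε δ) b]
  rw [hrw]
  exact hP hx' hy' ha hb hab

lemma affineSpan_coe_eq_span {s : Set E} (h0 : (0:E) ∈ s) :
    (affineSpan ℝ s : Set E) = ↑(span ℝ s) := by
  apply subset_antisymm
  · have h1 : affineSpan ℝ s ≤ (span ℝ s).toAffineSubspace := by
      rw [affineSpan_le]
      exact Submodule.subset_span
    exact h1
  · intro x hx
    have hdir : x ∈ (affineSpan ℝ s).direction := by
      rw [direction_affineSpan]
      have : s ⊆ ↑(vectorSpan ℝ s) := by
        intro y hy
        have := vsub_mem_vectorSpan ℝ hy h0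
        simpa using this
      exact Submodule.span_le.mpr this hx
    have h0' : (0:E) ∈ affineSpan ℝ s := subset_affineSpan ℝ s h0
    have := AffineSubspace.vadd_mem_of_mem_direction hdir h0'
    simpa using this

lemma vectorSpan_eq_span {s : Set E} (h0 : (0:E) ∈ s) : vectorSpan ℝ s = span ℝ s := by
  apply le_antisymm
  · rw [vectorSpan_def, Submodule.span_le]
    rintro x ⟨a, ha, b, hb, rfl⟩
    exact Submodule.sub_mem _ (Submodule.subset_span ha) (Submodule.subset_span hb)
  · apply Submodule.span_le.mpr
    intro y hy
    have := vsub_mem_vectorSpan ℝ hy h0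
    simpa using this

lemma intrinsicInterior_eq_interior_of_affineSpan_eq_top {s : Set E}
    (h : affineSpan ℝ s = ⊤) : intrinsicInterior ℝ s = interior s := by
  apply subset_antisymm
  · rintro x ⟨y, hy, rfl⟩
    have hopen : IsOpen ((affineSpan ℝ s : Set E)) := by
      rw [h]
      simp only [AffineSubspace.top_coe]
      exact isOpen_univ
    have he := hopen.isOpenEmbedding_subtypeVal
    have hopen2 : IsOpen (Subtype.val '' interior ((Subtype.val) ⁻¹' s : Set (affineSpan ℝ s))) :=
      he.isOpenMap _ isOpen_interior
    have hsubs : Subtype.val '' interior ((Subtype.val) ⁻¹' s : Set (affineSpan ℝ s)) ⊆ s := by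
      rintro z ⟨w, hw, rfl⟩
      have h3 : w ∈ (Subtype.val ⁻¹' s : Set (affineSpan ℝ s)) := interior_subset hw
      exact h3
    exact interior_maximal hsubs hopen2 ⟨y, hy, rfl⟩
  · intro x hx
    exact interior_subset_intrinsicInterior hx

lemma zero_mem_intrinsicInterior_iff {P : Set E} (hP : Convex ℝ P) (h0 : (0:E) ∈ P) :
    (0:E) ∈ intrinsicInterior ℝ P ↔ scone P = ↑(span ℝ P) := by
  classical
  set W := span ℝ P with hW
  have hsub : P ⊆ ↑W := Submodule.subset_span
  set P₀ : Set W := (Subtype.val) ⁻¹' P with hP₀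
  have himg : (W.subtypeₗᵢ.toAffineIsometry : W →ᵃⁱ[ℝ] E) '' P₀ = P := by
    have hco : ⇑(W.subtypeₗᵢ.toAffineIsometry) = (Subtype.val : W → E) := rfl
    rw [hco, hP₀]
    apply Set.image_preimage_eq_of_subset
    rw [Subtype.range_coe]
    exact hsub
  have hiff : (0:E) ∈ intrinsicInterior ℝ P ↔ (0:W) ∈ intrinsicInterior ℝ P₀ := by
    conv_lhs => rw [← himg]
    rw [AffineIsometry.image_intrinsicInterior]
    constructor
    · rintro ⟨y, hy, hy0⟩
      have : y = 0 := by
        apply Subtype.coe_injective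
        simpa using hy0
      rwa [← this]
    · intro h
      exact ⟨0, h, by simp⟩
  -- span of P₀ is ⊤ in W
  have hspan₀ : span ℝ P₀ = (⊤ : Submodule ℝ W) := by
    have hmap : Submodule.map W.subtype (span ℝ P₀) = W := by
      rw [← Submodule.span_image]
      have hco : ⇑W.subtype = (Subtype.val : W → E) := rfl
      have : W.subtype '' P₀ = P := by
        rw [hco, hP₀]
        apply Set.image_preimage_eq_of_subset
        rw [Subtype.range_coe]
        exact hsub
      rw [this]
    have h2 : Submodule.map W.subtype (⊤ : Submodule ℝ W) = W := by
      rw [Submodule.map_top, Submodule.range_subtype]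
    exact Submodule.map_injective_of_injective W.injective_subtype (hmap.trans h2.symm)
  have h0₀ : (0:W) ∈ P₀ := by simpa [hP₀] using h0
  have haff : affineSpan ℝ P₀ = ⊤ := by
    apply AffineSubspace.ext_of_direction_eq
    · rw [direction_affineSpan, vectorSpan_eq_span h0₀, hspan₀, AffineSubspace.direction_top]
    · exact ⟨0, subset_affineSpan ℝ P₀ h0₀, trivial⟩
  have hconv₀ : Convex ℝ P₀ := by
    intro x hx y hy a b ha hb hab
    show ((a • x + b • y : W) : E) ∈ P
    push_cast
    exact hP hx hy ha hb hab
  rw [hiff, intrinsicInterior_eq_interior_of_affineSpan_eq_top haff]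
  constructor
  · -- interior point 0 gives: every x in span has positive multiple in P
    intro hint
    apply subset_antisymm (scone_subset_span P)
    rintro x hx
    set x' : W := ⟨x, hx⟩ with hx'
    have hcont : Continuous (fun t : ℝ => t • x') := by continuity
    have h0lim : (fun t : ℝ => t • x') 0 = 0 := by simp
    have hev : ∀ᶠ t in nhds (0:ℝ), t • x' ∈ P₀ := by
      have h2 := hcont.tendsto 0
      simp only [zero_smul] at h2
      exact h2 (mem_interior_iff_mem_nhds.mp hint)
    obtain ⟨δ, hδ, hδP⟩ := Metric.eventually_nhds_iff.mp hev
    refine ⟨δ/2, by positivity, ?_⟩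
    have ht : dist (δ/2) (0:ℝ) < δ := by
      rw [Real.dist_eq, sub_zero, abs_of_pos (by positivity)]
      linarith
    exact hδP ht
  · intro hsc
    -- interior of P₀ is nonempty
    have hne : (interior P₀).Nonempty := by
      rw [hconv₀.interior_nonempty_iff_affineSpan_eq_top]
      exact haff
    obtain ⟨y, hy⟩ := hne
    -- -y is in the span, hence some positive multiple of -y is in P
    have : ((-y : W) : E) ∈ scone P := by
      rw [hsc]
      exact Submodule.coe_mem _
    obtain ⟨δ, hδ, hδP⟩ := this
    have hzP₀ : δ • (-y) ∈ P₀ := by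
      show ((δ • (-y) : W) : E) ∈ P
      push_cast
      exact hδP
    have hcombo := hconv₀.combo_interior_self_mem_interior hy hzP₀
      (a := δ/(1+δ)) (b := 1/(1+δ)) (by positivity) (by positivity)
      (by field_simp; ring)
    have hfin : (δ/(1+δ)) • y + (1/(1+δ)) • (δ • (-y)) = (0:W) := by
      rw [smul_smul, smul_neg, ← sub_eq_add_neg, sub_eq_zero]
      congr 1
      ring
    rwa [hfin] at hcombo

/-- sum of two elements of a convex cone is in the cone -/
lemma cone_add_mem {D : Set E} (hDv : Convex ℝ D)
    (hDs : ∀ t : ℝ, 0 ≤ t → ∀ y ∈ D, t • y ∈ D) {a b : E}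
    (ha : a ∈ D) (hb : b ∈ D) : a + b ∈ D := by
  have h := hDv ha hb (by norm_num : (0:ℝ) ≤ 1/2) (by norm_num : (0:ℝ) ≤ 1/2) (by norm_num)
  have h2 := hDs 2 (by norm_num) _ h
  rwa [smul_add, smul_smul, smul_smul, show (2:ℝ) * (1/2) = 1 by norm_num, one_smul, one_smul] at h2

/-- approach along a ray: if `c + t • d ∈ D` for all small positive `t` and `D` is closed,
then `c ∈ D`. -/
lemma mem_of_ray_mem {D : Set E} (hDc : IsClosed D) {c d : E}
    (h : ∀ t : ℝ, 0 < t → c + t • d ∈ D) : c ∈ D := by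
  have h1 : Filter.Tendsto (fun k : ℕ => (1 / (k + 1) : ℝ)) Filter.atTop (nhds 0) :=
    tendsto_one_div_add_atTop_nhds_zero_nat
  have h2 : Filter.Tendsto (fun k : ℕ => c + (1 / (k + 1) : ℝ) • d) Filter.atTop
      (nhds (c + (0:ℝ) • d)) :=
    Filter.Tendsto.const_add c (h1.smul_const d)
  simp only [zero_smul, add_zero] at h2
  exact hDc.mem_of_tendsto h2 (Filter.Eventually.of_forall
    (fun k => h _ (by positivity)))

/-- If one of the two cones is a subspace and the union is convex, the cones are nested. -/
lemma nested_of_isSub {C D : Set E}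
    (hCs : ∀ t : ℝ, 0 ≤ t → ∀ y ∈ C, t • y ∈ C)
    (hDc : IsClosed D) (hDs : ∀ t : ℝ, 0 ≤ t → ∀ y ∈ D, t • y ∈ D)
    (hU : Convex ℝ (C ∪ D)) (W : Submodule ℝ E) (hW : C = ↑W) :
    C ⊆ D ∨ D ⊆ C := by
  by_cases hDC : D ⊆ C
  · exact Or.inr hDC
  left
  obtain ⟨d, hdD, hdC⟩ := not_subset.mp hDC
  intro c hc
  apply mem_of_ray_mem hDc
  intro t ht
  have hmem : c + t • d ∈ C ∪ D := by
    have h2c : (2:ℝ) • c ∈ C ∪ D := Or.inl (hCs 2 (by norm_num) c hc)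
    have h2d : (2*t) • d ∈ C ∪ D := Or.inr (hDs _ (by positivity) d hdD)
    have := hU h2c h2d (by norm_num : (0:ℝ) ≤ 1/2) (by norm_num : (0:ℝ) ≤ 1/2) (by norm_num)
    rwa [smul_smul, smul_smul, show (1/2:ℝ) * 2 = 1 by norm_num,
      show (1/2:ℝ) * (2*t) = t by ring, one_smul] at this
  rcases hmem with h | h
  · exfalso
    have h1 : c + t • d ∈ (W : Set E) := by rw [← hW]; exact h
    have h2 : c ∈ (W : Set E) := by rw [← hW]; exact hc
    have htd : t • d ∈ W := by
      have := W.sub_mem h1 h2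
      simpa using this
    have hdW : d ∈ W := by
      have := W.smul_mem t⁻¹ htd
      rwa [smul_smul, inv_mul_cancel₀ ht.ne', one_smul] at this
    apply hdC
    rw [hW]
    exact hdW
  · exact h

/-- key segment argument: if the intersection of the two cones is a subspace and both cones
contain points not in the other, then the negative of such a point is in the other cone. -/
lemma seg_neg_mem {C D : Set E}
    (hCc : IsClosed C)
    (hDc : IsClosed D) (hDv : Convex ℝ D) (hDs : ∀ t : ℝ, 0 ≤ t → ∀ y ∈ D, t • y ∈ D)
    (hU : Convex ℝ (C ∪ D)) (L : Submodule ℝ E) (hL : C ∩ D = ↑L)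
    {x d : E} (hx : x ∈ C) (hxD : x ∉ D) (hd : d ∈ D) (hdC : d ∉ C) : -x ∈ D := by
  set γ : ℝ → E := fun t => x + t • (d - x) with hγ
  have hγcont : Continuous γ := by
    apply continuous_const.add (Continuous.smul continuous_id continuous_const)
  have hγ01 : ∀ t : ℝ, γ t = (1-t) • x + t • d := by
    intro t
    rw [hγ]
    simp only [smul_sub, sub_smul, one_smul]
    abel
  set A : Set ℝ := Icc (0:ℝ) 1 ∩ γ ⁻¹' C with hA
  have hA0 : (0:ℝ) ∈ A := by
    constructor
    · exact ⟨le_refl 0, by norm_num⟩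
    · show γ 0 ∈ C
      rw [hγ]
      simpa using hx
  have hAbdd : BddAbove A := ⟨1, fun t ht => ht.1.2⟩
  have hAclosed : IsClosed A := isClosed_Icc.inter (hCc.preimage hγcont)
  set t₀ := sSup A with ht₀
  have htA : t₀ ∈ A := hAclosed.csSup_mem ⟨0, hA0⟩ hAbdd
  have ht0 : 0 ≤ t₀ := htA.1.1
  have ht1 : t₀ ≤ 1 := htA.1.2
  have hmC : γ t₀ ∈ C := htA.2
  have htlt1 : t₀ < 1 := by
    rcases lt_or_eq_of_le ht1 with h | h
    · exact h
    · exfalso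
      apply hdC
      have : γ 1 = d := by rw [hγ]; simp
      rw [h] at hmC
      rwa [this] at hmC
  have hseg : ∀ t : ℝ, t₀ < t → t ≤ 1 → γ t ∈ D := by
    intro t htt ht1'
    have h0t : 0 ≤ t := le_trans ht0 htt.le
    have hmem : γ t ∈ C ∪ D := by
      have := hU (Or.inl hx : x ∈ C ∪ D) (Or.inr hd : d ∈ C ∪ D)
        (by linarith : (0:ℝ) ≤ 1 - t) h0t (by ring)
      rwa [← hγ01] at this
    rcases hmem with h | h
    · exfalso
      have : t ∈ A := ⟨⟨h0t, ht1'⟩, h⟩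
      have := le_csSup hAbdd this
      linarith
    · exact h
  have hmD : γ t₀ ∈ D := by
    set u : ℕ → ℝ := fun k => t₀ + (1 - t₀) * (1 / (k+1)) with hu
    have humem : ∀ k : ℕ, γ (u k) ∈ D := by
      intro k
      apply hseg
      · rw [hu]
        have hpos : (0:ℝ) < 1 - t₀ := by linarith
        have : (0:ℝ) < (1 - t₀) * (1 / (k+1)) := mul_pos hpos (by positivity)
        linarith
      · rw [hu]
        have h1 : (1 / ((k:ℝ)+1)) ≤ 1 := by
          rw [div_le_one (by positivity)]
          have : (0:ℝ) ≤ k := Nat.cast_nonneg k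
          linarith
        nlinarith
    have hutend : Filter.Tendsto u Filter.atTop (nhds t₀) := by
      have h1 : Filter.Tendsto (fun k : ℕ => (1 / (k + 1) : ℝ)) Filter.atTop (nhds 0) :=
        tendsto_one_div_add_atTop_nhds_zero_nat
      have h2 := (h1.const_mul (1 - t₀)).const_add t₀
      simp only [mul_zero, add_zero] at h2
      exact h2
    exact hDc.mem_of_tendsto ((hγcont.tendsto t₀).comp hutend)
      (Filter.Eventually.of_forall humem)
  have htpos : 0 < t₀ := by
    rcases lt_or_eq_of_le ht0 with h | h
    · exact h
    · exfalso
      apply hxD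
      have : γ 0 = x := by rw [hγ]; simp
      rw [← h] at hmD
      rwa [this] at hmD
  have hmL : γ t₀ ∈ (L : Set E) := hL ▸ ⟨hmC, hmD⟩
  have hmLneg : -(γ t₀) ∈ D := by
    have : -(γ t₀) ∈ (L : Set E) := L.neg_mem hmL
    rw [← hL] at this
    exact this.2
  have halg : t₀ • d + -(γ t₀) = -((1 - t₀) • x) := by
    rw [hγ01 t₀]
    rw [sub_smul, one_smul]
    abel
  have hDadd := fun a ha b hb => cone_add_mem hDv hDs (a := a) (b := b) ha hb
  have hneg : -((1 - t₀) • x) ∈ D := by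
    rw [← halg]
    exact hDadd _ (hDs t₀ htpos.le d hd) _ hmLneg
  have := hDs (1 - t₀)⁻¹ (inv_nonneg.mpr (by linarith)) _ hneg
  rwa [smul_neg, smul_smul, inv_mul_cancel₀ (by linarith : (1:ℝ) - t₀ ≠ 0), one_smul] at this

/-- When the union of two non-subspace cones is a subspace `W`, the intersection is a
hyperplane in `W`. -/
lemma inter_eq_hyperplane {C D : Set E}
    (hCc : IsClosed C) (hCv : Convex ℝ C) (hC0 : (0:E) ∈ C)
    (hCs : ∀ t : ℝ, 0 ≤ t → ∀ y ∈ C, t • y ∈ C)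
    (hDc : IsClosed D) (hDv : Convex ℝ D)
    (hDs : ∀ t : ℝ, 0 ≤ t → ∀ y ∈ D, t • y ∈ D)
    (hDns : ¬∃ W' : Submodule ℝ E, D = ↑W')
    (W : Submodule ℝ E) (hW : C ∪ D = ↑W)
    {d₀ : E} (hd₀D : d₀ ∈ D) (hd₀C : d₀ ∉ C) :
    ∃ L : Submodule ℝ E, C ∩ D = ↑L ∧ finrank ℝ L + 1 = finrank ℝ W := by
  obtain ⟨f, u, hfC, hfd₀⟩ := geometric_hahn_banach_closed_point hCv hCc hd₀C
  have hu : 0 < u := by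
    have := hfC 0 hC0
    simpa using this
  have hfC0 : ∀ a ∈ C, f a ≤ 0 := by
    intro a ha
    by_contra hpos
    push_neg at hpos
    have ht : (0:ℝ) < (u+1) / f a := by positivity
    have := hfC _ (hCs ((u+1)/f a) ht.le a ha)
    rw [_root_.map_smul, smul_eq_mul, div_mul_cancel₀ _ hpos.ne'] at this
    linarith
  have hfd₀pos : 0 < f d₀ := lt_trans hu hfd₀
  have hWC : C ⊆ (W : Set E) := by rw [← hW]; exact subset_union_left
  have hWD : D ⊆ (W : Set E) := by rw [← hW]; exact subset_union_right
  have hd₀W : d₀ ∈ W := hWD hd₀D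
  have hposD : ∀ y : E, y ∈ W → 0 < f y → y ∈ D := by
    intro y hy hfy
    have : y ∈ C ∪ D := by rw [hW]; exact hy
    rcases this with h | h
    · exact absurd hfy (not_lt.mpr (hfC0 y h))
    · exact h
  have hnnD : ∀ y : E, y ∈ W → 0 ≤ f y → y ∈ D := by
    intro y hy hfy
    apply mem_of_ray_mem hDc
    intro t ht
    apply hposD
    · exact W.add_mem hy (W.smul_mem t hd₀W)
    · rw [map_add, _root_.map_smul, smul_eq_mul]
      nlinarith
  have hDnn : ∀ y ∈ D, 0 ≤ f y := by
    intro y hy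
    by_contra hneg
    push_neg at hneg
    apply hDns
    refine ⟨W, Set.Subset.antisymm hWD ?_⟩
    intro w hw
    have hwW : w ∈ W := hw
    set s := (|f w| + 1) / (-f y) with hs
    have hfy' : (0:ℝ) < -f y := by linarith
    have hspos : 0 < s := by positivity
    have h1 : w - s • y ∈ D := by
      apply hposD
      · exact W.sub_mem hwW (W.smul_mem s (hWD hy))
      · rw [map_sub, _root_.map_smul, smul_eq_mul]
        have : s * (-f y) = |f w| + 1 := div_mul_cancel₀ _ hfy'.ne'
        have habs : -f w ≤ |f w| := neg_le_abs _
        nlinarith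
    have h2 : s • y ∈ D := hDs s hspos.le y hy
    have := cone_add_mem hDv hDs h1 h2
    rwa [sub_add_cancel] at this
  have hCz : ∀ y : E, y ∈ W → f y ≤ 0 → y ∈ C := by
    intro y hy hfy
    apply mem_of_ray_mem hCc (d := -d₀)
    intro t ht
    have hmem : y + t • -d₀ ∈ W := W.add_mem hy (W.smul_mem t (W.neg_mem hd₀W))
    have hneg : f (y + t • -d₀) < 0 := by
      rw [map_add, _root_.map_smul, map_neg, smul_eq_mul]
      nlinarith
    have : y + t • -d₀ ∈ C ∪ D := by rw [hW]; exact hmem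
    rcases this with h | h
    · exact h
    · exact absurd (hDnn _ h) (not_le.mpr hneg)
  set K := LinearMap.ker (f : E →ₗ[ℝ] ℝ) with hK
  refine ⟨W ⊓ K, ?_, ?_⟩
  · apply subset_antisymm
    · rintro y ⟨hyC, hyD⟩
      refine ⟨hWC hyC, ?_⟩
      show f y = 0
      exact le_antisymm (hfC0 y hyC) (hDnn y hyD)
    · rintro y ⟨hyW, hyK⟩
      have hfy : f y = 0 := hyK
      exact ⟨hCz y hyW (le_of_eq hfy), hnnD y hyW (ge_of_eq hfy)⟩
  · -- rank computation
    set b : W →ₗ[ℝ] ℝ := (f : E →ₗ[ℝ] ℝ).comp W.subtype with hb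
    have hbrange : LinearMap.range b = ⊤ := by
      rw [LinearMap.range_eq_top]
      intro r
      refine ⟨(r / f d₀) • ⟨d₀, hd₀W⟩, ?_⟩
      rw [_root_.map_smul, smul_eq_mul]
      show r / f d₀ * f d₀ = r
      exact div_mul_cancel₀ _ hfd₀pos.ne'
    have hrn := LinearMap.finrank_range_add_finrank_ker b
    rw [hbrange, finrank_top, finrank_self] at hrn
    have hker : LinearMap.ker b = Submodule.comap W.subtype K := by
      rw [hb, LinearMap.ker_comp]
    have hfr : finrank ℝ (W ⊓ K : Submodule ℝ E) = finrank ℝ (LinearMap.ker b) := by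
      rw [hker, ← Submodule.map_comap_subtype]
      exact (LinearEquiv.finrank_eq
        (Submodule.equivMapOfInjective W.subtype W.injective_subtype _)).symm
    rw [hfr]
    omega

theorem cone_valuation (C D : Set E)
    (hCc : IsClosed C) (hCv : Convex ℝ C) (hC0 : (0:E) ∈ C)
    (hCs : ∀ t : ℝ, 0 ≤ t → ∀ y ∈ C, t • y ∈ C)
    (hDc : IsClosed D) (hDv : Convex ℝ D) (hD0 : (0:E) ∈ D)
    (hDs : ∀ t : ℝ, 0 ≤ t → ∀ y ∈ D, t • y ∈ D)
    (hU : Convex ℝ (C ∪ D)) :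
    (if ∃ W : Submodule ℝ E, C = ↑W then (-1:ℝ) ^ finrank ℝ (span ℝ C) else 0)
      + (if ∃ W : Submodule ℝ E, D = ↑W then (-1:ℝ) ^ finrank ℝ (span ℝ D) else 0)
    = (if ∃ W : Submodule ℝ E, C ∪ D = ↑W then (-1:ℝ) ^ finrank ℝ (span ℝ (C ∪ D)) else 0)
      + (if ∃ W : Submodule ℝ E, C ∩ D = ↑W then (-1:ℝ) ^ finrank ℝ (span ℝ (C ∩ D)) else 0) := by
  classical
  by_cases hCD : C ⊆ D
  · rw [union_eq_self_of_subset_left hCD, inter_eq_self_of_subset_left hCD]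
    exact add_comm _ _
  by_cases hDC : D ⊆ C
  · rw [union_eq_self_of_subset_right hDC, inter_eq_self_of_subset_right hDC]
  -- non-nested case
  obtain ⟨c₀, hc₀C, hc₀D⟩ := not_subset.mp hCD
  obtain ⟨d₀, hd₀D, hd₀C⟩ := not_subset.mp hDC
  have hU' : Convex ℝ (D ∪ C) := by rwa [union_comm]
  have hCns : ¬∃ W : Submodule ℝ E, C = ↑W := by
    rintro ⟨W, hW⟩
    rcases nested_of_isSub hCs hDc hDs hU W hW with h | h
    · exact hCD h
    · exact hDC h
  have hDns : ¬∃ W : Submodule ℝ E, D = ↑W := by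
    rintro ⟨W, hW⟩
    rcases nested_of_isSub hDs hCc hCs hU' W hW with h | h
    · exact hDC h
    · exact hCD h
  rw [if_neg hCns, if_neg hDns]
  by_cases hI : ∃ L : Submodule ℝ E, C ∩ D = ↑L
  · obtain ⟨L, hL⟩ := hI
    have hL' : D ∩ C = ↑L := by rw [inter_comm]; exact hL
    -- the union is symmetric, hence a subspace
    have hsymm : ∀ x ∈ C ∪ D, -x ∈ C ∪ D := by
      intro x hx
      rcases hx with hxC | hxD
      · by_cases hxD : x ∈ D
        · have hxL : x ∈ (L : Set E) := by rw [← hL]; exact ⟨hxC, hxD⟩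
          have : -x ∈ (L : Set E) := L.neg_mem hxL
          rw [← hL] at this
          exact Or.inr this.2
        · exact Or.inr (seg_neg_mem hCc hDc hDv hDs hU L hL hxC hxD hd₀D hd₀C)
      · by_cases hxC : x ∈ C
        · have hxL : x ∈ (L : Set E) := by rw [← hL]; exact ⟨hxC, hxD⟩
          have : -x ∈ (L : Set E) := L.neg_mem hxL
          rw [← hL] at this
          exact Or.inl this.1
        · exact Or.inl (seg_neg_mem hDc hCc hCv hCs hU' L hL' hxD hxC hc₀C hc₀D)
    have hUsmul : ∀ (t : ℝ) (x : E), x ∈ C ∪ D → t • x ∈ C ∪ D := by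
      intro t x hx
      rcases le_or_gt 0 t with ht | ht
      · rcases hx with h | h
        · exact Or.inl (hCs t ht x h)
        · exact Or.inr (hDs t ht x h)
      · have hnx := hsymm x hx
        have : (-t) • (-x) ∈ C ∪ D := by
          rcases hnx with h | h
          · exact Or.inl (hCs (-t) (by linarith) _ h)
          · exact Or.inr (hDs (-t) (by linarith) _ h)
        rwa [smul_neg, neg_smul, neg_neg] at this
    set W : Submodule ℝ E :=
      { carrier := C ∪ D
        add_mem' := fun {a b} ha hb => by
          have h1 : (1/2 : ℝ) • a + (1/2 : ℝ) • b ∈ C ∪ D :=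
            hU ha hb (by norm_num) (by norm_num) (by norm_num)
          have h2 := hUsmul 2 _ h1
          rwa [smul_add, smul_smul, smul_smul, show (2:ℝ) * (1/2) = 1 by norm_num,
            one_smul, one_smul] at h2
        zero_mem' := Or.inl hC0
        smul_mem' := fun t x hx => hUsmul t x hx } with hWdef
    have hW : C ∪ D = ↑W := rfl
    obtain ⟨L2, hL2, hrank⟩ := inter_eq_hyperplane hCc hCv hC0 hCs hDc hDv hDs hDns W hW
      hd₀D hd₀C
    rw [if_pos ⟨W, hW⟩, if_pos ⟨L2, hL2⟩]
    rw [hW, hL2, Submodule.span_eq, Submodule.span_eq]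
    rw [← hrank, pow_succ]
    ring
  · rw [if_neg hI]
    have hUns : ¬∃ W : Submodule ℝ E, C ∪ D = ↑W := by
      rintro ⟨W, hW⟩
      obtain ⟨L2, hL2, _⟩ := inter_eq_hyperplane hCc hCv hC0 hCs hDc hDv hDs hDns W hW
        hd₀D hd₀C
      exact hI ⟨L2, hL2⟩
    rw [if_neg hUns]


lemma isSub_iff (C : Set E) : (∃ W : Submodule ℝ E, C = ↑W) ↔ C = ↑(span ℝ C) := by
  constructor
  · rintro ⟨W, rfl⟩
    rw [Submodule.span_eq]
  · intro h
    exact ⟨span ℝ C, h⟩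

end ConeDevelopment

/-- `Phi` expressed through the star cone. -/
lemma Phi_eq_cone {n : ℕ} (P : Set (Fin n → ℝ)) (hP : Convex ℝ P) (h0 : (0 : Fin n → ℝ) ∈ P) :
    Phi P = (if ∃ W : Submodule ℝ (Fin n → ℝ), scone P = ↑W
      then (-1:ℝ) ^ finrank ℝ (span ℝ (scone P)) else 0) := by
  have hdim : pdim P = finrank ℝ (span ℝ (scone P)) := by
    rw [pdim, direction_affineSpan, vectorSpan_eq_span h0, span_scone]
  have hcond : ((0 : Fin n → ℝ) ∈ intrinsicInterior ℝ P) ↔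
      (∃ W : Submodule ℝ (Fin n → ℝ), scone P = ↑W) := by
    rw [zero_mem_intrinsicInterior_iff hP h0, isSub_iff, span_scone]
  rw [Phi]
  by_cases h : (0 : Fin n → ℝ) ∈ intrinsicInterior ℝ P
  · rw [if_pos h, if_pos (hcond.mp h), hdim]
  · rw [if_neg h, if_neg (fun hw => h (hcond.mpr hw))]

theorem phi_is_valuation (n : ℕ) (hn : 2 ≤ n) (P Q : Set (Fin n → ℝ))
    (hP : IsPolytope P) (hQ : IsPolytope Q)
    (h0P : (0 : Fin n → ℝ) ∈ P) (h0Q : (0 : Fin n → ℝ) ∈ Q)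
    (hPQ : Convex ℝ (P ∪ Q)) :
    Phi P + Phi Q = Phi (P ∪ Q) + Phi (P ∩ Q) := by
  obtain ⟨S, -, hPrepr⟩ := hP
  obtain ⟨T, -, hQrepr⟩ := hQ
  have hPc : Convex ℝ P := hPrepr ▸ convex_convexHull ℝ _
  have hQc : Convex ℝ Q := hQrepr ▸ convex_convexHull ℝ _
  have hCrepr : scone P = coneOf S := by
    rw [hPrepr]
    exact scone_convexHull S (hPrepr ▸ h0P)
  have hDrepr : scone Q = coneOf T := by
    rw [hQrepr]
    exact scone_convexHull T (hQrepr ▸ h0Q)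
  have hCc : IsClosed (scone P) := hCrepr ▸ isClosed_coneOf S
  have hDc : IsClosed (scone Q) := hDrepr ▸ isClosed_coneOf T
  have hCv : Convex ℝ (scone P) := hCrepr ▸ convex_coneOf S
  have hDv : Convex ℝ (scone Q) := hDrepr ▸ convex_coneOf T
  have hC0 : (0 : Fin n → ℝ) ∈ scone P := zero_mem_scone h0P
  have hD0 : (0 : Fin n → ℝ) ∈ scone Q := zero_mem_scone h0Q
  have hCs : ∀ t : ℝ, 0 ≤ t → ∀ y ∈ scone P, t • y ∈ scone P := by
    intro t ht y hy
    rw [hCrepr] at hy ⊢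
    exact smul_mem_coneOf ht hy
  have hDs : ∀ t : ℝ, 0 ≤ t → ∀ y ∈ scone Q, t • y ∈ scone Q := by
    intro t ht y hy
    rw [hDrepr] at hy ⊢
    exact smul_mem_coneOf ht hy
  rw [Phi_eq_cone P hPc h0P, Phi_eq_cone Q hQc h0Q,
    Phi_eq_cone (P ∪ Q) hPQ (Or.inl h0P),
    Phi_eq_cone (P ∩ Q) (hPc.inter hQc) ⟨h0P, h0Q⟩,
    scone_union P Q, scone_inter hPc hQc h0P h0Q]
  exact cone_valuation (scone P) (scone Q) hCc hCv hC0 hCs hDc hDv hD0 hDs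
    (by rw [← scone_union P Q]; exact convex_scone hPQ (Or.inl h0P))
end

section
/- If P and Q are convex polytopes in ℝⁿ whose union P ∪ Q is convex, and neither P ⊆ Q nor Q ⊆ P, then P and Q have the same affine hull; in particular dim P = dim Q = dim(P ∪ Q). -/
open MeasureTheory Classical

lemma subset_span_aux {n : ℕ} {P Q : Set (Fin n → ℝ)}
    (hPc : IsClosed P) (hPQ : Convex ℝ (P ∪ Q)) {q : Fin n → ℝ}
    (hqQ : q ∈ Q) (hqP : q ∉ P) : P ⊆ (affineSpan ℝ Q : Set (Fin n → ℝ)) := by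
  intro x hx
  have hxq : x ≠ q := fun h => hqP (h ▸ hx)
  obtain ⟨ε, hε, hball⟩ := Metric.isOpen_iff.1 hPc.isOpen_compl q hqP
  have hd : (0:ℝ) < dist x q := dist_pos.2 hxq
  set t : ℝ := min 1 (ε / (2 * dist x q)) with ht
  have ht0 : 0 < t := lt_min one_pos (by positivity)
  have ht1 : t ≤ 1 := min_le_left _ _
  set y : Fin n → ℝ := t • x + (1 - t) • q with hy
  have hyseg : y ∈ segment ℝ x q := ⟨t, 1 - t, le_of_lt ht0, by linarith, by ring, rfl⟩
  have hyq : y - q = t • (x - q) := by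
    simp [hy, smul_sub, sub_smul]; abel
  have hyball : y ∈ Metric.ball q ε := by
    rw [Metric.mem_ball, dist_eq_norm, hyq, norm_smul, Real.norm_eq_abs,
      abs_of_pos ht0, ← dist_eq_norm]
    calc t * dist x q ≤ (ε / (2 * dist x q)) * dist x q := by
          exact mul_le_mul_of_nonneg_right (min_le_right _ _) hd.le
      _ = ε / 2 := by field_simp
      _ < ε := by linarith
  have hyQ : y ∈ Q := by
    rcases hPQ.segment_subset (Set.mem_union_left _ hx) (Set.mem_union_right _ hqQ) hyseg with h | h
    · exact absurd h (hball hyball)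
    · exact h
  have hxeq : x = (1/t) • (y -ᵥ q) +ᵥ q := by
    have : (1/t) • (y - q) = x - q := by
      rw [hyq, smul_smul, one_div, inv_mul_cancel₀ ht0.ne', one_smul]
    simp only [vsub_eq_sub, vadd_eq_add, this]
    abel
  rw [hxeq]
  exact AffineSubspace.smul_vsub_vadd_mem _ _ (subset_affineSpan ℝ Q hyQ)
    (subset_affineSpan ℝ Q hqQ) (subset_affineSpan ℝ Q hqQ)

theorem union_convex_same_affine_hull (n : ℕ) (P Q : Set (Fin n → ℝ))
    (hP : IsPolytope P) (hQ : IsPolytope Q) (hPQ : Convex ℝ (P ∪ Q))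
    (hPQ' : ¬ P ⊆ Q) (hQP' : ¬ Q ⊆ P) :
    affineSpan ℝ P = affineSpan ℝ Q ∧
      pdim P = pdim (P ∪ Q) ∧ pdim Q = pdim (P ∪ Q) := by
  obtain ⟨S, hS, rfl⟩ := hP
  obtain ⟨T, hT, rfl⟩ := hQ
  have hPc : IsClosed (convexHull ℝ (S : Set (Fin n → ℝ))) :=
    (S.finite_toSet.isCompact_convexHull (𝕜 := ℝ)).isClosed
  have hQc : IsClosed (convexHull ℝ (T : Set (Fin n → ℝ))) :=
    (T.finite_toSet.isCompact_convexHull (𝕜 := ℝ)).isClosed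
  obtain ⟨q, hqQ, hqP⟩ := Set.not_subset.1 hQP'
  obtain ⟨p, hpP, hpQ⟩ := Set.not_subset.1 hPQ'
  have h1 := subset_span_aux hPc hPQ hqQ hqP
  have h2 := subset_span_aux hQc (Set.union_comm _ _ ▸ hPQ) hpP hpQ
  have hspan : affineSpan ℝ (convexHull ℝ (S : Set (Fin n → ℝ)))
      = affineSpan ℝ (convexHull ℝ (T : Set (Fin n → ℝ))) :=
    le_antisymm (affineSpan_le.2 h1) (affineSpan_le.2 h2)
  have hsp : affineSpan ℝ (convexHull ℝ (S : Set (Fin n → ℝ)) ∪ convexHull ℝ (T : Set (Fin n → ℝ)))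
      = affineSpan ℝ (convexHull ℝ (S : Set (Fin n → ℝ))) := by
    refine le_antisymm (affineSpan_le.2 (Set.union_subset (subset_affineSpan ℝ _) ?_))
      (affineSpan_mono ℝ Set.subset_union_left)
    rw [hspan]; exact subset_affineSpan ℝ _
  exact ⟨hspan, by unfold pdim; rw [hsp], by unfold pdim; rw [hsp, hspan]⟩
end

section
/- If P, Q are convex polytopes with P ∪ Q convex and the same affine hull, and 0 ∉ relint P, 0 ∉ relint Q, but 0 ∈ relint(P ∪ Q), then 0 ∈ relint(P ∩ Q) and dim(P ∪ Q) = dim(P ∩ Q) + 1. -/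
open MeasureTheory Classical

set_option maxHeartbeats 1000000

open Metric Set Pointwise

private lemma memII {n : ℕ} (s : Set (Fin n → ℝ)) (x : Fin n → ℝ) :
    x ∈ intrinsicInterior ℝ s ↔ x ∈ affineSpan ℝ s ∧
      ∃ ε > 0, ∀ y, y ∈ affineSpan ℝ s → dist y x < ε → y ∈ s := by
  rw [mem_intrinsicInterior]
  constructor
  · rintro ⟨y, hy, rfl⟩
    refine ⟨y.2, ?_⟩
    rw [mem_interior_iff_mem_nhds, Metric.mem_nhds_iff] at hy
    obtain ⟨ε, hε, hb⟩ := hy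
    refine ⟨ε, hε, fun z hz hd => ?_⟩
    have : (⟨z, hz⟩ : affineSpan ℝ s) ∈ ball y ε := by
      simpa [Metric.mem_ball, Subtype.dist_eq] using hd
    exact hb this
  · rintro ⟨hx, ε, hε, h⟩
    refine ⟨⟨x, hx⟩, ?_, rfl⟩
    rw [mem_interior_iff_mem_nhds, Metric.mem_nhds_iff]
    exact ⟨ε, hε, fun z hz => h z z.2 (by simpa [Metric.mem_ball, Subtype.dist_eq] using hz)⟩

private lemma memdir {n : ℕ} {A : AffineSubspace ℝ (Fin n → ℝ)} (h0 : (0 : Fin n → ℝ) ∈ A)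
    (x : Fin n → ℝ) : x ∈ A.direction ↔ x ∈ A := by
  constructor
  · intro hx
    have := AffineSubspace.vadd_mem_of_mem_direction hx h0
    simpa using this
  · intro hx
    have := AffineSubspace.vsub_mem_direction hx h0
    simpa using this

private lemma exists_support {n : ℕ} {P : Set (Fin n → ℝ)}
    (hP : IsPolytope P) (h0 : (0 : Fin n → ℝ) ∈ P)
    (h0i : (0 : Fin n → ℝ) ∉ intrinsicInterior ℝ P) :
    ∃ f : (Fin n → ℝ) →L[ℝ] ℝ, (∀ x ∈ P, f x ≤ 0) ∧
      ∃ z, z ∈ (affineSpan ℝ P).direction ∧ f z < 0 := by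
  obtain ⟨S, -, hPdef⟩ := hP
  have hconv : Convex ℝ P := hPdef ▸ convex_convexHull ℝ _
  have h0span : (0 : Fin n → ℝ) ∈ affineSpan ℝ P := subset_affineSpan ℝ P h0
  set K := (affineSpan ℝ P).direction with hK
  obtain ⟨W, hW⟩ := K.exists_isCompl
  set φ : (Fin n → ℝ) →L[ℝ] (Fin n → ℝ) :=
    LinearMap.toContinuousLinearMap (K.subtype ∘ₗ K.linearProjOfIsCompl W hW) with hφ
  obtain ⟨z, hz⟩ := Set.Nonempty.intrinsicInterior hconv ⟨0, h0⟩
  rw [memII] at hz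
  obtain ⟨hzspan, ε, hε, hball⟩ := hz
  have hzP : z ∈ P := hball z hzspan (by simpa using hε)
  set T := P + (W : Set (Fin n → ℝ)) with hT
  have hTconv : Convex ℝ T := hconv.add W.convex
  -- z ∈ interior T
  have hzint : z ∈ interior T := by
    rw [mem_interior_iff_mem_nhds, Metric.mem_nhds_iff]
    refine ⟨ε / (‖φ‖ + 1), by positivity, fun x hx => ?_⟩
    set k : K := K.linearProjOfIsCompl W hW (x - z) with hk
    have hφk : φ (x - z) = (k : Fin n → ℝ) := by simp [hφ, hk]
    have hwmem : (x - z) - (k : Fin n → ℝ) ∈ W := by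
      have h := Submodule.projection_add_projection_eq_self hW (x - z)
      have h2 : (x - z) - (k : Fin n → ℝ) =
          (W.linearProjOfIsCompl K hW.symm (x - z) : Fin n → ℝ) := by
        rw [sub_eq_iff_eq_add, add_comm]
        exact h.symm
      rw [h2]; exact Submodule.coe_mem _
    have hnk : ‖(k : Fin n → ℝ)‖ < ε := by
      rw [← hφk]
      calc ‖φ (x - z)‖ ≤ ‖φ‖ * ‖x - z‖ := φ.le_opNorm _
        _ < ε := by
            have hx' : ‖x - z‖ < ε / (‖φ‖ + 1) := by
              rw [mem_ball, dist_eq_norm] at hx; exact hx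
            have h1 : (0:ℝ) ≤ ‖φ‖ := norm_nonneg _
            have h2 : ‖φ‖ * ‖x - z‖ ≤ ‖φ‖ * (ε / (‖φ‖ + 1)) :=
              mul_le_mul_of_nonneg_left hx'.le h1
            have h3 : ‖φ‖ * (ε / (‖φ‖ + 1)) < ε := by
              rw [mul_comm, div_mul_eq_mul_div, div_lt_iff₀ (by positivity)]
              nlinarith
            linarith
    have hzkspan : z + (k : Fin n → ℝ) ∈ affineSpan ℝ P := by
      have := AffineSubspace.vadd_mem_of_mem_direction k.2 hzspan
      simpa [add_comm] using this
    have hzkP : z + (k : Fin n → ℝ) ∈ P := by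
      refine hball _ hzkspan ?_
      simpa [dist_eq_norm] using hnk
    have : x = (z + (k : Fin n → ℝ)) + ((x - z) - (k : Fin n → ℝ)) := by ring
    rw [this]
    exact Set.add_mem_add hzkP hwmem
  -- 0 ∉ interior T
  have h0not : (0 : Fin n → ℝ) ∉ interior T := by
    intro h
    apply h0i
    rw [mem_interior_iff_mem_nhds, Metric.mem_nhds_iff] at h
    obtain ⟨r, hr, hb⟩ := h
    rw [memII]
    refine ⟨h0span, r, hr, fun y hyspan hyd => ?_⟩
    have hyT : y ∈ T := hb (by simpa [mem_ball] using hyd)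
    obtain ⟨p, hp, w, hw, hpw⟩ := Set.mem_add.1 hyT
    have hpK : p ∈ K := (memdir h0span p).2 (subset_affineSpan ℝ P hp)
    have hyK : y ∈ K := (memdir h0span y).2 hyspan
    have hwK : w ∈ K := by
      have : w = y - p := by rw [← hpw]; ring
      rw [this]; exact Submodule.sub_mem _ hyK hpK
    have hw0 : w = 0 := by
      have := hW.disjoint
      exact (Submodule.disjoint_def.1 this) w hwK hw
    rw [← hpw, hw0, add_zero]; exact hp
  obtain ⟨f, hf⟩ := geometric_hahn_banach_open_point hTconv.interior isOpen_interior h0not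
  have hf0 : ∀ a ∈ interior T, f a < 0 := by simpa using hf
  -- f ≤ 0 on T
  have hfT : ∀ x ∈ T, f x ≤ 0 := by
    have hcl : ∀ x ∈ closure (interior T), f x ≤ 0 := by
      intro x hx
      have : closure (interior T) ⊆ f ⁻¹' Set.Iic 0 :=
        closure_minimal (fun a ha => le_of_lt (hf0 a ha)) (isClosed_Iic.preimage f.continuous)
      exact this hx
    intro x hx
    refine hcl x ?_
    have htend : Filter.Tendsto
        (fun m : ℕ => (1/(m+1) : ℝ) • z + (1 - 1/(m+1) : ℝ) • x) Filter.atTop (nhds x) := by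
      have h1 : Filter.Tendsto (fun m : ℕ => (1/(m+1) : ℝ)) Filter.atTop (nhds 0) :=
        tendsto_one_div_add_atTop_nhds_zero_nat
      have h2 := (h1.smul_const z).add
        (((tendsto_const_nhds (x := (1:ℝ))).sub h1).smul_const x)
      simpa using h2
    refine mem_closure_of_tendsto htend (Filter.Eventually.of_forall fun m => ?_)
    have hm : (0:ℝ) < 1/(m+1) := by positivity
    have hm1 : (1:ℝ)/(m+1) ≤ 1 := by
      rw [div_le_one (by positivity)]; linarith [Nat.cast_nonneg (α := ℝ) m]
    exact hTconv.combo_interior_self_mem_interior hzint hx hm (by linarith) (by ring)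
  have hfP : ∀ x ∈ P, f x ≤ 0 := fun x hx =>
    hfT x ⟨x, hx, 0, W.zero_mem, add_zero x⟩
  have hzK : z ∈ K := (memdir h0span z).2 hzspan
  exact ⟨f, hfP, z, hzK, by simpa using hf z hzint⟩

theorem relint_union_case (n : ℕ) (P Q : Set (Fin n → ℝ))
    (hP : IsPolytope P) (hQ : IsPolytope Q) (hPQ : Convex ℝ (P ∪ Q))
    (haff : affineSpan ℝ P = affineSpan ℝ Q)
    (h0P : (0 : Fin n → ℝ) ∉ intrinsicInterior ℝ P)
    (h0Q : (0 : Fin n → ℝ) ∉ intrinsicInterior ℝ Q)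
    (h0U : (0 : Fin n → ℝ) ∈ intrinsicInterior ℝ (P ∪ Q)) :
    (0 : Fin n → ℝ) ∈ intrinsicInterior ℝ (P ∩ Q) ∧
      pdim (P ∪ Q) = pdim (P ∩ Q) + 1 := by
  classical
  have hPclosed : IsClosed P := by
    obtain ⟨S, -, rfl⟩ := id hP; exact (S.finite_toSet).isClosed_convexHull ℝ
  have hQclosed : IsClosed Q := by
    obtain ⟨S, -, rfl⟩ := id hQ; exact (S.finite_toSet).isClosed_convexHull ℝ
  have hspanU : affineSpan ℝ (P ∪ Q) = affineSpan ℝ P := by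
    apply le_antisymm
    · rw [affineSpan_le]
      rintro x (hx | hx)
      · exact subset_affineSpan ℝ P hx
      · rw [haff]; exact subset_affineSpan ℝ Q hx
    · exact affineSpan_mono ℝ subset_union_left
  rw [memII] at h0U
  obtain ⟨h0Uspan, ε, hε, hballU⟩ := h0U
  have h0span : (0 : Fin n → ℝ) ∈ affineSpan ℝ P := hspanU ▸ h0Uspan
  set K := (affineSpan ℝ P).direction with hKdef
  have hKiff : ∀ x : Fin n → ℝ, x ∈ K ↔ x ∈ affineSpan ℝ P := fun x => memdir h0span x
  -- membership of small K points in P ∪ Q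
  have hsmallU : ∀ x : Fin n → ℝ, x ∈ K → dist x 0 < ε → x ∈ P ∪ Q := by
    intro x hx hd
    exact hballU x (by rw [hspanU]; exact (hKiff x).1 hx) hd
  -- 0 ∈ P and 0 ∈ Q
  have h0mem : ∀ R S : Set (Fin n → ℝ), R ∪ S = P ∪ Q → IsClosed S →
      affineSpan ℝ R = affineSpan ℝ P →
      ((0:Fin n → ℝ) ∉ intrinsicInterior ℝ R) → (0:Fin n → ℝ) ∈ S := by
    intro R S hRS hSclosed hRspan h0R
    by_contra h0S
    apply h0R
    obtain ⟨δ, hδ, hbd⟩ := Metric.isOpen_iff.1 hSclosed.isOpen_compl 0 h0S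
    rw [memII]
    refine ⟨hRspan ▸ h0span, min ε δ, lt_min hε hδ, fun y hy hyd => ?_⟩
    have hyU : y ∈ P ∪ Q := by
      refine hballU y ?_ (lt_of_lt_of_le hyd (min_le_left _ _))
      rw [hspanU, ← hRspan]; exact hy
    rw [← hRS] at hyU
    rcases hyU with hyR | hyS
    · exact hyR
    · exact absurd hyS (hbd (by simpa [mem_ball] using lt_of_lt_of_le hyd (min_le_right _ _)))
  have h0Q' : (0 : Fin n → ℝ) ∈ Q := h0mem P Q rfl hQclosed rfl h0P
  have h0P' : (0 : Fin n → ℝ) ∈ P := h0mem Q P (union_comm Q P) hPclosed haff.symm h0Q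
  -- supporting functionals
  obtain ⟨f, hfP, zf, hzfK, hzf⟩ := exists_support hP h0P' h0P
  obtain ⟨g, hgQ, zg, hzgK, hzg⟩ := exists_support hQ h0Q' h0Q
  rw [← haff] at hzgK
  -- no v with f v > 0 and g v > 0
  have hstar : ∀ v ∈ K, 0 < f v → g v ≤ 0 := by
    intro v hv hfv
    by_contra hg
    push_neg at hg
    have ht : (0:ℝ) < ε / (2 * (‖v‖ + 1)) := by positivity
    have hmem : (ε / (2 * (‖v‖ + 1))) • v ∈ P ∪ Q := by
      refine hsmallU _ (K.smul_mem _ hv) ?_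
      rw [dist_zero_right, norm_smul, Real.norm_eq_abs, abs_of_pos ht]
      rw [div_mul_eq_mul_div, div_lt_iff₀ (by positivity)]
      nlinarith [norm_nonneg v]
    rcases hmem with h | h
    · have := hfP _ h; rw [_root_.map_smul] at this; simp only [smul_eq_mul] at this; nlinarith
    · have := hgQ _ h; rw [_root_.map_smul] at this; simp only [smul_eq_mul] at this; nlinarith
  -- f v = 0 → g v ≤ 0 on K
  have haux : ∀ v ∈ K, f v = 0 → g v ≤ 0 := by
    intro v hv hfv
    by_contra hg
    push_neg at hg
    set s : ℝ := g v / (|g zf| + 1) with hs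
    have hspos : 0 < s := by positivity
    set w : Fin n → ℝ := v - s • zf with hwdef
    have hwK : w ∈ K := K.sub_mem hv (K.smul_mem _ hzfK)
    have hfw : 0 < f w := by
      simp only [hwdef, map_sub, _root_.map_smul, smul_eq_mul, hfv]
      nlinarith
    have hgw := hstar w hwK hfw
    simp only [hwdef, map_sub, _root_.map_smul, smul_eq_mul] at hgw
    -- g v ≤ s * g zf
    have h1 : g zf ≤ |g zf| := le_abs_self _
    have h2 : s * (|g zf| + 1) = g v := by rw [hs, div_mul_cancel₀]; positivity
    nlinarith [abs_nonneg (g zf)]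
  have hzero : ∀ v ∈ K, f v = 0 → g v = 0 := by
    intro v hv hfv
    have h1 := haux v hv hfv
    have h2 := haux (-v) (K.neg_mem hv) (by rw [map_neg, hfv, neg_zero])
    rw [map_neg] at h2
    linarith
  -- g = c • f on K with c < 0
  set u : Fin n → ℝ := -zf with hu
  have huK : u ∈ K := K.neg_mem hzfK
  have hfu : 0 < f u := by rw [hu, map_neg]; linarith
  set c : ℝ := g u / f u with hc
  have hrel : ∀ v ∈ K, g v = c * f v := by
    intro v hv
    have hwK : v - (f v / f u) • u ∈ K := K.sub_mem hv (K.smul_mem _ huK)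
    have hfw : f (v - (f v / f u) • u) = 0 := by
      rw [map_sub, _root_.map_smul, smul_eq_mul]
      field_simp
      ring
    have := hzero _ hwK hfw
    rw [map_sub, _root_.map_smul, smul_eq_mul] at this
    have hfune : f u ≠ 0 := ne_of_gt hfu
    field_simp [hc] at this ⊢
    rw [hc, mul_div_assoc', eq_div_iff hfune]
    linarith [this]
  have hcneg : c < 0 := by
    have hgu : g u ≤ 0 := hstar u huK hfu
    rcases lt_or_eq_of_le hgu with h | h
    · exact div_neg_of_neg_of_pos h hfu
    · exfalso
      have h2 : g zg = c * f zg := hrel zg hzgK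
      rw [hc, h] at h2
      simp at h2
      linarith
  -- points of K with f = 0 near 0 are in P ∩ Q
  have hHsub : ∀ x : Fin n → ℝ, x ∈ K → f x = 0 → dist x 0 < ε / 2 → x ∈ P ∩ Q := by
    intro x hxK hfx hxd
    have h1 : Filter.Tendsto (fun m : ℕ => (1/(m+1) : ℝ)) Filter.atTop (nhds 0) :=
      tendsto_one_div_add_atTop_nhds_zero_nat
    have hev : ∀ᶠ m : ℕ in Filter.atTop, (1/(m+1) : ℝ) * ‖zf‖ < ε / 2 := by
      have : Filter.Tendsto (fun m : ℕ => (1/(m+1) : ℝ) * ‖zf‖) Filter.atTop (nhds 0) := by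
        simpa using h1.mul_const ‖zf‖
      exact this.eventually (eventually_lt_nhds (by positivity))
    have hgen : ∀ (σ : ℝ), σ = 1 ∨ σ = -1 →
        ∀ m : ℕ, (1/(m+1) : ℝ) * ‖zf‖ < ε / 2 → x + ((1/(m+1):ℝ) * σ) • zf ∈ P ∪ Q := by
      intro σ hσ m hm
      refine hsmallU _ (K.add_mem hxK (K.smul_mem _ hzfK)) ?_
      rw [dist_zero_right]
      calc ‖x + ((1/(m+1):ℝ) * σ) • zf‖ ≤ ‖x‖ + ‖((1/(m+1):ℝ) * σ) • zf‖ := norm_add_le _ _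
        _ < ε := by
            rw [norm_smul, Real.norm_eq_abs, abs_mul]
            have hd : ‖x‖ < ε / 2 := by rwa [dist_zero_right] at hxd
            have hσ1 : |σ| = 1 := by rcases hσ with rfl | rfl <;> simp
            have hpos : |(1/(m+1):ℝ)| = 1/(m+1) := abs_of_pos (by positivity)
            rw [hσ1, hpos]
            nlinarith
    have hxP : x ∈ P := by
      have htend : Filter.Tendsto (fun m : ℕ => x + ((1/(m+1):ℝ) * 1) • zf)
          Filter.atTop (nhds x) := by
        have h2 := (h1.mul_const (1:ℝ)).smul_const zf
        have h3 := (tendsto_const_nhds (x := x)).add h2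
        simpa using h3
      refine hPclosed.mem_of_tendsto htend ?_
      · filter_upwards [hev] with m hm
        have hmem := hgen 1 (Or.inl rfl) m hm
        have htpos : (0:ℝ) < 1/(m+1) * 1 := by positivity
        rcases hmem with h | h
        · exact h
        · exfalso
          have hgle := hgQ _ h
          have hmK : x + ((1/(m+1):ℝ) * 1) • zf ∈ K := K.add_mem hxK (K.smul_mem _ hzfK)
          rw [hrel _ hmK] at hgle
          rw [map_add, _root_.map_smul, smul_eq_mul, hfx, zero_add] at hgle
          have hneg : (1 / (↑m + 1) * 1 : ℝ) * f zf < 0 := mul_neg_of_pos_of_neg htpos hzf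
          nlinarith [mul_pos_of_neg_of_neg hcneg hneg]
    have hxQ : x ∈ Q := by
      have htend : Filter.Tendsto (fun m : ℕ => x + ((1/(m+1):ℝ) * (-1)) • zf)
          Filter.atTop (nhds x) := by
        have h2 := (h1.mul_const (-1:ℝ)).smul_const zf
        have h3 := (tendsto_const_nhds (x := x)).add h2
        simpa using h3
      refine hQclosed.mem_of_tendsto htend ?_
      · filter_upwards [hev] with m hm
        have hmem := hgen (-1) (Or.inr rfl) m hm
        have htpos : (0:ℝ) < 1/(m+1) := by positivity
        rcases hmem with h | h
        · exfalso
          have hfle := hfP _ h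
          rw [map_add, _root_.map_smul, smul_eq_mul, hfx, zero_add] at hfle
          nlinarith [mul_pos htpos (neg_pos.2 hzf)]
        · exact h
    exact ⟨hxP, hxQ⟩
  -- P ∩ Q ⊆ K ⊓ ker f
  set M : Submodule ℝ (Fin n → ℝ) := K ⊓ LinearMap.ker (f : (Fin n → ℝ) →ₗ[ℝ] ℝ) with hM
  have hPQM : P ∩ Q ⊆ (M : Set (Fin n → ℝ)) := by
    rintro x ⟨hxP, hxQ⟩
    have hxK : x ∈ K := (hKiff x).2 (subset_affineSpan ℝ P hxP)
    have hf1 : f x ≤ 0 := hfP x hxP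
    have hg1 : g x ≤ 0 := hgQ x hxQ
    rw [hrel x hxK] at hg1
    have hfx : f x = 0 := by nlinarith
    exact Submodule.mem_inf.2 ⟨hxK, by simpa using hfx⟩
  have hspanle : affineSpan ℝ (P ∩ Q) ≤ M.toAffineSubspace := by
    rw [affineSpan_le]
    intro x hx
    exact hPQM hx
  have h0PQ : (0 : Fin n → ℝ) ∈ P ∩ Q := ⟨h0P', h0Q'⟩
  -- conclusion 1
  have hmain : (0 : Fin n → ℝ) ∈ intrinsicInterior ℝ (P ∩ Q) := by
    rw [memII]
    refine ⟨subset_affineSpan ℝ _ h0PQ, ε/2, by positivity, fun y hy hyd => ?_⟩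
    have hyM : y ∈ M := (Submodule.mem_toAffineSubspace).1 (hspanle hy)
    obtain ⟨hyK, hyker⟩ := Submodule.mem_inf.1 hyM
    exact hHsub y hyK (by simpa using hyker) hyd
  refine ⟨hmain, ?_⟩
  -- direction of span of P ∩ Q is M
  have hdir : (affineSpan ℝ (P ∩ Q)).direction = M := by
    apply le_antisymm
    · have := AffineSubspace.direction_le hspanle
      rwa [Submodule.toAffineSubspace_direction] at this
    · intro m hm
      obtain ⟨hmK, hmker⟩ := Submodule.mem_inf.1 hm
      rcases eq_or_ne m 0 with rfl | hm0
      · exact Submodule.zero_mem _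
      · set s : ℝ := ε / (4 * ‖m‖) with hs
        have hnm : (0:ℝ) < ‖m‖ := norm_pos_iff.2 hm0
        have hspos : 0 < s := by positivity
        have hsm : s • m ∈ P ∩ Q := by
          have hfm : f m = 0 := hmker
          refine hHsub _ (K.smul_mem _ hmK) (by rw [_root_.map_smul, smul_eq_mul, hfm, mul_zero]) ?_
          rw [dist_zero_right, norm_smul, Real.norm_eq_abs, abs_of_pos hspos, hs]
          rw [div_mul_eq_mul_div, div_lt_iff₀ (by positivity)]
          nlinarith
        have h1 : s • m ∈ affineSpan ℝ (P ∩ Q) := subset_affineSpan ℝ _ hsm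
        have h2 : (0:Fin n → ℝ) ∈ affineSpan ℝ (P ∩ Q) := subset_affineSpan ℝ _ h0PQ
        have h3 : s • m ∈ (affineSpan ℝ (P ∩ Q)).direction := by
          have := AffineSubspace.vsub_mem_direction h1 h2
          simpa using this
        have := (affineSpan ℝ (P ∩ Q)).direction.smul_mem s⁻¹ h3
        rwa [inv_smul_smul₀ (ne_of_gt hspos)] at this
  -- rank computation
  have hfin : Module.finrank ℝ K = Module.finrank ℝ M + 1 := by
    set fK : K →ₗ[ℝ] ℝ := (f : (Fin n → ℝ) →ₗ[ℝ] ℝ) ∘ₗ K.subtype with hfK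
    have hsurj : Function.Surjective fK := by
      intro r
      refine ⟨(r / f zf) • ⟨zf, hzfK⟩, ?_⟩
      simp only [hfK, _root_.map_smul, LinearMap.comp_apply, Submodule.coe_subtype, smul_eq_mul]
      have hne : f zf ≠ 0 := ne_of_lt hzf
      field_simp
      rfl
    have h1 := LinearMap.finrank_range_add_finrank_ker fK
    rw [LinearMap.range_eq_top.2 hsurj, finrank_top] at h1
    have h2 : Submodule.map K.subtype (LinearMap.ker fK) = M := by
      ext x
      simp only [Submodule.mem_map, LinearMap.mem_ker, Submodule.mem_inf, hfK,
        LinearMap.comp_apply, Submodule.coe_subtype, hM]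
      constructor
      · rintro ⟨⟨y, hy⟩, hker, rfl⟩
        exact ⟨hy, hker⟩
      · rintro ⟨hx, hker⟩
        exact ⟨⟨x, hx⟩, hker, rfl⟩
    have h3 := Submodule.finrank_map_subtype_eq K (LinearMap.ker fK)
    rw [h2] at h3
    rw [← h3] at h1
    simp only [Module.finrank_self] at h1
    omega
  show Module.finrank ℝ (affineSpan ℝ (P ∪ Q)).direction
      = Module.finrank ℝ (affineSpan ℝ (P ∩ Q)).direction + 1
  rw [hspanU, hdir, ← hKdef, hfin]
end

section
/- The function P ↦ (-1)^(dim P)·𝟙[0 ∈ relint P] is Borel measurable on the space of convex polytopes in ℝⁿ equipped with the Hausdorff metric. -/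
open MeasureTheory Classical TopologicalSpace

/-- The space of convex polytopes in `ℝⁿ` with the Hausdorff metric topology. -/
def PolytopeSpace (n : ℕ) : Type :=
  {K : NonemptyCompacts (Fin n → ℝ) // IsPolytope (K : Set (Fin n → ℝ))}

noncomputable instance (n : ℕ) : MetricSpace (PolytopeSpace n) :=
  inferInstanceAs (MetricSpace {K : NonemptyCompacts (Fin n → ℝ) //
    IsPolytope (K : Set (Fin n → ℝ))})

section Aux

open Set Metric

variable {n : ℕ}

/-- Metric characterization of membership in the intrinsic interior. -/
lemma mem_intrinsicInterior_iff_ball {s : Set (Fin n → ℝ)} {x : Fin n → ℝ} :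
    x ∈ intrinsicInterior ℝ s ↔
      x ∈ s ∧ ∃ ε > 0, ∀ y ∈ (affineSpan ℝ s : Set (Fin n → ℝ)), dist y x < ε → y ∈ s := by
  constructor
  · rintro hx
    obtain ⟨y, hy, rfl⟩ := mem_intrinsicInterior.1 hx
    refine ⟨intrinsicInterior_subset hx, ?_⟩
    obtain ⟨ε, hε, hball⟩ := Metric.mem_nhds_iff.1 (mem_interior_iff_mem_nhds.1 hy)
    refine ⟨ε, hε, fun z hz hdz => ?_⟩
    exact hball (show (⟨z, hz⟩ : affineSpan ℝ s) ∈ Metric.ball y ε from by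
      simpa [Metric.mem_ball, Subtype.dist_eq] using hdz)
  · rintro ⟨hxs, ε, hε, hball⟩
    have hxA : x ∈ affineSpan ℝ s := subset_affineSpan ℝ s hxs
    refine mem_intrinsicInterior.2 ⟨⟨x, hxA⟩, ?_, rfl⟩
    rw [mem_interior_iff_mem_nhds, Metric.mem_nhds_iff]
    exact ⟨ε, hε, fun z hz => hball z z.2 (by simpa [Subtype.dist_eq] using hz)⟩

/-- `0` is in the relative interior of a nonempty compact convex set `s` iff `s` is stable
under scaling by `-(1/(m+1))` for some natural number `m`. -/
lemma zero_mem_relint_iff {s : Set (Fin n → ℝ)} (hconv : Convex ℝ s)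
    (hcomp : IsCompact s) (hne : s.Nonempty) :
    (0 : Fin n → ℝ) ∈ intrinsicInterior ℝ s ↔
      ∃ m : ℕ, ∀ x ∈ s, (-(1 / ((m : ℝ) + 1))) • x ∈ s := by
  constructor
  · intro h
    obtain ⟨h0s, ε, hε, hball⟩ := mem_intrinsicInterior_iff_ball.1 h
    obtain ⟨R, hR⟩ := (isBounded_iff_forall_norm_le (s := s)).1 hcomp.isBounded
    obtain ⟨m, hm⟩ := exists_nat_gt ((|R| + 1) / ε)
    refine ⟨m, fun x hx => ?_⟩
    have hxA : x ∈ affineSpan ℝ s := subset_affineSpan ℝ s hx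
    have h0A : (0 : Fin n → ℝ) ∈ affineSpan ℝ s := subset_affineSpan ℝ s h0s
    have hm1 : (0:ℝ) < (m : ℝ) + 1 := by positivity
    have hzA : (-(1 / ((m : ℝ) + 1))) • x ∈ affineSpan ℝ s := by
      have := (affineSpan ℝ s).smul_vsub_vadd_mem (-(1 / ((m : ℝ) + 1))) hxA h0A h0A
      simpa using this
    refine hball _ hzA ?_
    have hx_le : ‖x‖ ≤ |R| := (hR x hx).trans (le_abs_self R)
    have hd : dist ((-(1 / ((m : ℝ) + 1))) • x) (0 : Fin n → ℝ) = (1 / ((m : ℝ) + 1)) * ‖x‖ := by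
      rw [dist_zero_right, norm_smul]
      congr 1
      rw [norm_neg, Real.norm_eq_abs, abs_of_pos (by positivity)]
    rw [hd]
    have h1 : (1 / ((m : ℝ) + 1)) * ‖x‖ ≤ (|R| + 1) / ((m : ℝ) + 1) := by
      rw [div_eq_mul_one_div (|R| + 1), mul_comm (|R|+1)]
      gcongr
      linarith [abs_nonneg R]
    refine h1.trans_lt ?_
    rw [div_lt_iff₀ hm1]
    have h2 : |R| + 1 < (m : ℝ) * ε := (div_lt_iff₀ hε).1 hm
    nlinarith
  · rintro ⟨m, hsub⟩
    set c : ℝ := -(1 / ((m : ℝ) + 1)) with hc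
    set e : ℝ := 1 / ((m : ℝ) + 1) with he
    have hepos : 0 < e := by positivity
    -- 0 ∈ s
    obtain ⟨x₀, hx₀⟩ := hne
    have h0s : (0 : Fin n → ℝ) ∈ s := by
      have h1 : c • x₀ ∈ s := hsub x₀ hx₀
      have hmem := hconv hx₀ h1 (a := e / (1 + e)) (b := 1 / (1 + e))
        (by positivity) (by positivity) (by field_simp; ring)
      have heq : (e / (1 + e)) • x₀ + (1 / (1 + e)) • c • x₀ = (0 : Fin n → ℝ) := by
        rw [smul_smul, ← add_smul]
        have hz : e / (1 + e) + 1 / (1 + e) * c = 0 := by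
          rw [hc, he]; field_simp; ring
        rw [hz, zero_smul]
      rwa [heq] at hmem
    -- relint point z
    obtain ⟨z, hz⟩ := Set.Nonempty.intrinsicInterior hconv ⟨x₀, hx₀⟩
    obtain ⟨hzs, δ, hδ, hball⟩ := mem_intrinsicInterior_iff_ball.1 hz
    set a : ℝ := e / (1 + e) with ha
    have hapos : 0 < a := by positivity
    refine mem_intrinsicInterior_iff_ball.2 ⟨h0s, a * δ, by positivity, fun y hyA hy => ?_⟩
    set w : Fin n → ℝ := (1 / a) • y + z with hw
    have h0A : (0 : Fin n → ℝ) ∈ affineSpan ℝ s := subset_affineSpan ℝ s h0s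
    have hzA : z ∈ affineSpan ℝ s := subset_affineSpan ℝ s hzs
    have hwA : w ∈ affineSpan ℝ s := by
      have := (affineSpan ℝ s).smul_vsub_vadd_mem (1 / a) hyA h0A hzA
      simpa [hw] using this
    have hy' : ‖y‖ < a * δ := by rwa [dist_zero_right] at hy
    have hws : w ∈ s := by
      refine hball w hwA ?_
      have hd : dist w z = (1 / a) * ‖y‖ := by
        rw [hw, dist_eq_norm, add_sub_cancel_right, norm_smul, Real.norm_eq_abs,
          abs_of_pos (by positivity : (0:ℝ) < 1 / a)]
      rw [hd]
      calc (1 / a) * ‖y‖ < (1 / a) * (a * δ) := mul_lt_mul_of_pos_left hy' (by positivity)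
        _ = δ := by field_simp
    have hczs : c • z ∈ s := hsub z hzs
    have hcomb := hconv hws hczs (a := a) (b := 1 / (1 + e))
      (le_of_lt hapos) (by positivity) (by rw [ha]; field_simp; ring)
    have heq : a • w + (1 / (1 + e)) • c • z = y := by
      have h1 : a * (1 / a) = 1 := by field_simp
      have h2 : a + 1 / (1 + e) * c = 0 := by rw [ha, hc, he]; field_simp; ring
      rw [hw, smul_add, smul_smul, smul_smul, h1, one_smul, add_assoc, ← add_smul, h2,
        zero_smul, add_zero]
    rwa [heq] at hcomb

/-- The set of nonempty compacts stable under scaling by `-(1/(m+1))` is closed. -/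
lemma isClosed_C (m : ℕ) :
    IsClosed {K : NonemptyCompacts (Fin n → ℝ) |
      ∀ x ∈ (K : Set (Fin n → ℝ)), (-(1 / ((m : ℝ) + 1))) • x ∈ (K : Set (Fin n → ℝ))} := by
  set c : ℝ := -(1 / ((m : ℝ) + 1)) with hc
  have hcnorm : ‖c‖ ≤ 1 := by
    rw [hc, norm_neg, Real.norm_eq_abs, abs_of_pos (by positivity)]
    rw [div_le_one (by positivity)]
    linarith [Nat.cast_nonneg (α := ℝ) m]
  rw [← isOpen_compl_iff]
  rw [Metric.isOpen_iff]
  intro K hK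
  simp only [mem_compl_iff, mem_setOf_eq, not_forall] at hK
  obtain ⟨x, hxK, hcx⟩ := hK
  set d : ℝ := infDist (c • x) (K : Set (Fin n → ℝ)) with hd
  have hdpos : 0 < d := by
    rcases lt_or_eq_of_le (infDist_nonneg (x := c • x) (s := (K : Set (Fin n → ℝ)))) with h | h
    · exact h
    · exact absurd (((K.isCompact.isClosed).mem_iff_infDist_zero K.nonempty).2 h.symm) hcx
  refine ⟨d / 3, by positivity, fun Q hQ => ?_⟩
  simp only [mem_compl_iff, mem_setOf_eq, not_forall]
  rw [Metric.mem_ball] at hQ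
  have finKQ : EMetric.hausdorffEdist (K : Set (Fin n → ℝ)) (Q : Set (Fin n → ℝ)) ≠ ⊤ :=
    Metric.hausdorffEdist_ne_top_of_nonempty_of_bounded K.nonempty Q.nonempty
      K.isCompact.isBounded Q.isCompact.isBounded
  have finQK : EMetric.hausdorffEdist (Q : Set (Fin n → ℝ)) (K : Set (Fin n → ℝ)) ≠ ⊤ := by
    unfold EMetric.hausdorffEdist at finKQ ⊢
    rwa [EMetric.hausdorffEdist_comm] at finKQ
  have hKQ : Metric.hausdorffDist (K : Set (Fin n → ℝ)) (Q : Set (Fin n → ℝ)) < d / 3 := by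
    rw [Metric.hausdorffDist_comm]
    rw [NonemptyCompacts.dist_eq] at hQ
    exact hQ
  obtain ⟨x', hx'Q, hxx'⟩ := Metric.exists_dist_lt_of_hausdorffDist_lt hxK hKQ finKQ
  refine ⟨x', hx'Q, fun hcx'Q => ?_⟩
  have h1 : infDist (c • x') (K : Set (Fin n → ℝ)) < d / 3 := by
    calc infDist (c • x') (K : Set (Fin n → ℝ))
        ≤ Metric.hausdorffDist (Q : Set (Fin n → ℝ)) (K : Set (Fin n → ℝ)) :=
          Metric.infDist_le_hausdorffDist_of_mem hcx'Q finQK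
      _ < d / 3 := by rwa [Metric.hausdorffDist_comm]
  obtain ⟨p, hpK, hp⟩ := (Metric.infDist_lt_iff K.nonempty).1 h1
  have h2 : d ≤ dist (c • x) p := Metric.infDist_le_dist_of_mem hpK
  have h3 : dist (c • x) (c • x') ≤ dist x x' := by
    rw [dist_smul₀]
    calc ‖c‖ * dist x x' ≤ 1 * dist x x' := mul_le_mul_of_nonneg_right hcnorm dist_nonneg
      _ = dist x x' := one_mul _
  have h4 : dist (c • x) p ≤ dist (c • x) (c • x') + dist (c • x') p := dist_triangle _ _ _
  linarith

lemma le_pdim_of_affineIndependent {s : Set (Fin n → ℝ)} {k : ℕ}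
    {p : Fin (k + 1) → (Fin n → ℝ)} (hmem : ∀ i, p i ∈ s) (hp : AffineIndependent ℝ p) :
    k ≤ pdim s := by
  have h1 : Module.finrank ℝ (vectorSpan ℝ (Set.range p)) = k :=
    hp.finrank_vectorSpan (by simp)
  have h2 : vectorSpan ℝ (Set.range p) ≤ vectorSpan ℝ s :=
    vectorSpan_mono ℝ (Set.range_subset_iff.2 hmem)
  rw [pdim, direction_affineSpan]
  rw [← h1]
  exact Submodule.finrank_mono h2

lemma exists_affineIndependent_of_le_pdim {s : Set (Fin n → ℝ)} {k : ℕ}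
    (hne : s.Nonempty) (h : k ≤ pdim s) :
    ∃ p : Fin (k + 1) → (Fin n → ℝ), (∀ i, p i ∈ s) ∧ AffineIndependent ℝ p := by
  obtain ⟨t, hts, hspan, hindep⟩ := exists_affineIndependent ℝ (Fin n → ℝ) s
  have htfin : t.Finite := finite_set_of_fin_dim_affineIndependent ℝ hindep
  letI := htfin.fintype
  have htne : t.Nonempty := by
    rcases t.eq_empty_or_nonempty with rfl | h
    · exfalso
      obtain ⟨x, hx⟩ := hne
      have : x ∈ affineSpan ℝ s := subset_affineSpan ℝ s hx
      rw [← hspan] at this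
      rw [AffineSubspace.span_empty] at this
      have hb := AffineSubspace.bot_coe ℝ (Fin n → ℝ) (Fin n → ℝ)
      rw [← AffineSubspace.mem_coe, hb] at this
      exact this
    · exact h
  have hcard : 1 ≤ Fintype.card ↥t := Fintype.card_pos_iff.2 (htne.to_subtype)
  obtain ⟨d, hd⟩ : ∃ d, Fintype.card ↥t = d + 1 := ⟨Fintype.card ↥t - 1, by omega⟩
  have hrank : Module.finrank ℝ (vectorSpan ℝ (Set.range ((↑) : t → (Fin n → ℝ)))) = d :=
    hindep.finrank_vectorSpan hd
  rw [Subtype.range_coe] at hrank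
  have hvs : vectorSpan ℝ t = vectorSpan ℝ s := by
    rw [← direction_affineSpan, ← direction_affineSpan, hspan]
  have hpd : pdim s = d := by
    rw [pdim, direction_affineSpan, ← hvs, hrank]
  have hkd : k + 1 ≤ Fintype.card ↥t := by omega
  let e : Fin (k + 1) ↪ ↥t := (Fin.castLEEmb (by simpa using hkd)).trans
    (Fintype.equivFin ↥t).symm.toEmbedding
  refine ⟨fun i => ((e i : ↥t) : Fin n → ℝ), fun i => hts (e i).2, ?_⟩
  exact hindep.comp_embedding e

/-- The set of nonempty compacts of dimension at least `k` is open. -/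
lemma isOpen_pdim_ge (k : ℕ) :
    IsOpen {K : NonemptyCompacts (Fin n → ℝ) | k ≤ pdim (K : Set (Fin n → ℝ))} := by
  rw [Metric.isOpen_iff]
  intro K hK
  obtain ⟨p, hmem, hp⟩ := exists_affineIndependent_of_le_pdim K.nonempty hK
  rw [affineIndependent_iff_linearIndependent_vsub ℝ p 0] at hp
  have hopen := isOpen_setOf_linearIndependent (𝕜 := ℝ) (E := Fin n → ℝ)
    (ι := {x : Fin (k + 1) // x ≠ 0})
  rw [Metric.isOpen_iff] at hopen
  obtain ⟨ε, hε, hball⟩ := hopen _ hp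
  refine ⟨ε / 4, by positivity, fun Q hQ => ?_⟩
  rw [Metric.mem_ball, NonemptyCompacts.dist_eq] at hQ
  have hKQ : Metric.hausdorffDist (K : Set (Fin n → ℝ)) (Q : Set (Fin n → ℝ)) < ε / 4 := by
    rwa [Metric.hausdorffDist_comm]
  have finKQ : EMetric.hausdorffEdist (K : Set (Fin n → ℝ)) (Q : Set (Fin n → ℝ)) ≠ ⊤ :=
    Metric.hausdorffEdist_ne_top_of_nonempty_of_bounded K.nonempty Q.nonempty
      K.isCompact.isBounded Q.isCompact.isBounded
  have hq : ∀ i : Fin (k + 1), ∃ y ∈ (Q : Set (Fin n → ℝ)), dist (p i) y < ε / 4 := fun i =>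
    Metric.exists_dist_lt_of_hausdorffDist_lt (hmem i) hKQ finKQ
  choose q hq1 hq2 using hq
  have hli : LinearIndependent ℝ fun i : {x : Fin (k + 1) // x ≠ 0} => q ↑i -ᵥ q 0 := by
    apply hball
    rw [Metric.mem_ball, dist_pi_lt_iff hε]
    intro i
    calc dist (q ↑i -ᵥ q 0) (p ↑i -ᵥ p 0) ≤ dist (q ↑i) (p ↑i) + dist (q 0) (p 0) :=
          dist_sub_sub_le _ _ _ _
      _ < ε / 4 + ε / 4 :=
          add_lt_add ((dist_comm (p ↑i) (q ↑i)) ▸ hq2 ↑i) ((dist_comm (p 0) (q 0)) ▸ hq2 0)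
      _ < ε := by linarith
  have haff : AffineIndependent ℝ q :=
    (affineIndependent_iff_linearIndependent_vsub ℝ q 0).2 hli
  exact le_pdim_of_affineIndependent hq1 haff

end Aux

theorem measurable_relint_indicator (n : ℕ) :
    @Measurable (PolytopeSpace n) ℝ (borel (PolytopeSpace n)) _
      (fun P => if (0 : Fin n → ℝ) ∈ intrinsicInterior ℝ (P.1 : Set (Fin n → ℝ)) then
        (-1 : ℝ) ^ pdim (P.1 : Set (Fin n → ℝ)) else 0) := by
  letI : MeasurableSpace (PolytopeSpace n) := borel (PolytopeSpace n)
  haveI : BorelSpace (PolytopeSpace n) := ⟨rfl⟩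
  have hiso : Isometry (fun P : PolytopeSpace n => P.1) := fun x y => rfl
  have hcont : Continuous (fun P : PolytopeSpace n => P.1) := hiso.continuous
  -- measurability of the dimension function
  have hOk : ∀ k : ℕ, MeasurableSet {P : PolytopeSpace n | k ≤ pdim (P.1 : Set (Fin n → ℝ))} :=
    fun k => ((isOpen_pdim_ge k).preimage hcont).measurableSet
  have hpdim : Measurable (fun P : PolytopeSpace n => pdim (P.1 : Set (Fin n → ℝ))) := by
    apply measurable_to_countable'
    intro k
    have hset : (fun P : PolytopeSpace n => pdim (P.1 : Set (Fin n → ℝ))) ⁻¹' {k} =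
        {P : PolytopeSpace n | k ≤ pdim (P.1 : Set (Fin n → ℝ))} \
          {P : PolytopeSpace n | k + 1 ≤ pdim (P.1 : Set (Fin n → ℝ))} := by
      ext P
      simp only [Set.mem_preimage, Set.mem_singleton_iff, Set.mem_diff, Set.mem_setOf_eq]
      omega
    rw [hset]
    exact (hOk k).diff (hOk (k + 1))
  have hpow : Measurable (fun P : PolytopeSpace n =>
      (-1 : ℝ) ^ pdim (P.1 : Set (Fin n → ℝ))) :=
    (measurable_from_top (f := fun j : ℕ => (-1 : ℝ) ^ j)).comp hpdim
  -- measurability of the relative-interior condition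
  have hE : MeasurableSet {P : PolytopeSpace n |
      (0 : Fin n → ℝ) ∈ intrinsicInterior ℝ (P.1 : Set (Fin n → ℝ))} := by
    have hset : {P : PolytopeSpace n |
        (0 : Fin n → ℝ) ∈ intrinsicInterior ℝ (P.1 : Set (Fin n → ℝ))} =
        ⋃ m : ℕ, (fun P : PolytopeSpace n => P.1) ⁻¹'
          {K : NonemptyCompacts (Fin n → ℝ) |
            ∀ x ∈ (K : Set (Fin n → ℝ)),
              (-(1 / ((m : ℝ) + 1))) • x ∈ (K : Set (Fin n → ℝ))} := by
      ext P
      obtain ⟨S, hSne, hPS⟩ := P.2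
      have hconv : Convex ℝ (P.1 : Set (Fin n → ℝ)) := by
        rw [hPS]; exact convex_convexHull ℝ _
      rw [Set.mem_setOf_eq, zero_mem_relint_iff hconv P.1.isCompact P.1.nonempty]
      simp [Set.mem_iUnion]
    rw [hset]
    exact MeasurableSet.iUnion fun m => ((isClosed_C m).preimage hcont).measurableSet
  exact Measurable.ite hE hpow measurable_const
end

section
/- The valuation Φ(P) = c·(-1)^(dim P)·𝟙[0 ∈ relint P] on convex polytopes containing the origin is upper semicontinuous (with respect to the Hausdorff metric) if and only if c = 0. -/
open MeasureTheory Classical TopologicalSpace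

/-- The space of convex polytopes in `ℝⁿ` containing the origin, with the Hausdorff metric. -/
def PolytopeSpace0 (n : ℕ) : Type :=
  {K : NonemptyCompacts (Fin n → ℝ) // IsPolytope (K : Set (Fin n → ℝ)) ∧
    (0 : Fin n → ℝ) ∈ (K : Set (Fin n → ℝ))}

noncomputable instance (n : ℕ) : MetricSpace (PolytopeSpace0 n) :=
  inferInstanceAs (MetricSpace {K : NonemptyCompacts (Fin n → ℝ) //
    IsPolytope (K : Set (Fin n → ℝ)) ∧ (0 : Fin n → ℝ) ∈ (K : Set (Fin n → ℝ))})


section Aux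

open Metric Set

variable {n : ℕ}

noncomputable def mkP (n : ℕ) (S : Finset (Fin n → ℝ)) (hS : S.Nonempty)
    (h0 : (0 : Fin n → ℝ) ∈ convexHull ℝ (S : Set (Fin n → ℝ))) : PolytopeSpace0 n :=
  ⟨⟨⟨convexHull ℝ (S : Set (Fin n → ℝ)), S.finite_toSet.isCompact_convexHull ℝ⟩, ⟨0, h0⟩⟩,
    ⟨S, hS, rfl⟩, h0⟩

lemma mkP_coe (S : Finset (Fin n → ℝ)) (hS : S.Nonempty)
    (h0 : (0 : Fin n → ℝ) ∈ convexHull ℝ (S : Set (Fin n → ℝ))) :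
    ((mkP n S hS h0).1 : Set (Fin n → ℝ)) = convexHull ℝ (S : Set (Fin n → ℝ)) := rfl

lemma mem_segment_smul {E : Type*} [AddCommGroup E] [Module ℝ E] {t r : ℝ} (hr : 0 < r)
    (ht : |t| ≤ r) (e : E) : t • e ∈ segment ℝ (-(r • e)) (r • e) := by
  obtain ⟨h1, h2⟩ := abs_le.1 ht
  refine ⟨(r - t) / (2 * r), (r + t) / (2 * r), div_nonneg (by linarith) (by linarith),
    div_nonneg (by linarith) (by linarith), ?_, ?_⟩
  · field_simp
    ring
  · rw [smul_neg, smul_smul, smul_smul, ← neg_smul, ← add_smul]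
    congr 1
    field_simp
    ring

lemma mem_intrinsicInterior_of_exists_open {s U : Set (Fin n → ℝ)} (hU : IsOpen U)
    (h0U : (0 : Fin n → ℝ) ∈ U) (h0s : (0 : Fin n → ℝ) ∈ s)
    (hsub : ∀ v ∈ U, v ∈ affineSpan ℝ s → v ∈ s) :
    (0 : Fin n → ℝ) ∈ intrinsicInterior ℝ s := by
  have h0span : (0 : Fin n → ℝ) ∈ affineSpan ℝ s := subset_affineSpan ℝ s h0s
  refine mem_intrinsicInterior.2 ⟨⟨0, h0span⟩, ?_, rfl⟩
  have hop : IsOpen ((↑) ⁻¹' U : Set (affineSpan ℝ s)) := hU.preimage continuous_subtype_val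
  exact interior_maximal (fun (y : affineSpan ℝ s) (hy : (y : Fin n → ℝ) ∈ U) => hsub _ hy y.2) hop h0U

lemma mem_span_of_mem_affineSpan_hull {S : Finset (Fin n → ℝ)} {T : Set (Fin n → ℝ)}
    (h0 : (0 : Fin n → ℝ) ∈ convexHull ℝ (S : Set (Fin n → ℝ)))
    (hST : (S : Set (Fin n → ℝ)) ⊆ (Submodule.span ℝ T : Set (Fin n → ℝ)))
    {v : Fin n → ℝ} (hv : v ∈ affineSpan ℝ (convexHull ℝ (S : Set (Fin n → ℝ)))) :
    v ∈ Submodule.span ℝ T := by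
  set P := convexHull ℝ (S : Set (Fin n → ℝ))
  have h0' : (0 : Fin n → ℝ) ∈ affineSpan ℝ P := subset_affineSpan ℝ P h0
  have hmem := AffineSubspace.vsub_mem_direction hv h0'
  rw [direction_affineSpan] at hmem
  rw [vsub_eq_sub, sub_zero] at hmem
  have hPT : P ⊆ (Submodule.span ℝ T : Set (Fin n → ℝ)) :=
    convexHull_min (hST.trans (by rfl)) (Submodule.span ℝ T).convex
  have hle : vectorSpan ℝ P ≤ Submodule.span ℝ T := by
    rw [vectorSpan_def]
    refine Submodule.span_le.2 ?_
    rintro _ ⟨x, hx, y, hy, rfl⟩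
    simp only [vsub_eq_sub]
    exact sub_mem (hPT hx) (hPT hy)
  exact hle hmem

lemma pdim_hull (S : Finset (Fin n → ℝ)) :
    pdim (convexHull ℝ (S : Set (Fin n → ℝ)))
      = Module.finrank ℝ (vectorSpan ℝ (S : Set (Fin n → ℝ))) := by
  unfold pdim
  rw [affineSpan_convexHull, direction_affineSpan]

end Aux

section Concrete

open Metric Set

variable {n : ℕ}

noncomputable def uvec (i : Fin n) : Fin n → ℝ := Pi.single i 1

lemma smul_uvec (i : Fin n) (t : ℝ) : t • uvec i = Pi.single i t := by
  unfold uvec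
  rw [← Pi.single_smul]
  simp

lemma smul_uvec_apply_same (i : Fin n) (t : ℝ) : (t • uvec i) i = t := by
  rw [smul_uvec, Pi.single_eq_same]

lemma smul_uvec_apply_ne {i j : Fin n} (h : j ≠ i) (t : ℝ) : (t • uvec i) j = 0 := by
  rw [smul_uvec, Pi.single_eq_of_ne h]

lemma norm_smul_uvec (i : Fin n) (t : ℝ) : ‖t • uvec i‖ = |t| := by
  rw [smul_uvec, Pi.norm_single, Real.norm_eq_abs]

lemma uvec_ne_zero (i : Fin n) : uvec i ≠ 0 := by
  intro h
  have := congrFun h i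
  rw [uvec, Pi.single_eq_same] at this
  simp at this

noncomputable def segS (i : Fin n) (s : ℝ) : Finset (Fin n → ℝ) :=
  {-(s • uvec i), s • uvec i}

lemma segS_coe (i : Fin n) (s : ℝ) :
    (segS i s : Set (Fin n → ℝ)) = {-(s • uvec i), s • uvec i} := by
  simp [segS]

lemma hull_segS (i : Fin n) (s : ℝ) :
    convexHull ℝ (segS i s : Set (Fin n → ℝ)) = segment ℝ (-(s • uvec i)) (s • uvec i) := by
  rw [segS_coe, convexHull_pair]

lemma mem_hull_segS {i : Fin n} {s t : ℝ} (hr : 0 < s) (ht : |t| ≤ s) :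
    t • uvec i ∈ convexHull ℝ (segS i s : Set (Fin n → ℝ)) := by
  rw [hull_segS]
  exact mem_segment_smul hr ht (uvec i)

lemma zero_mem_hull_segS {i : Fin n} {s : ℝ} (hr : 0 < s) :
    (0 : Fin n → ℝ) ∈ convexHull ℝ (segS i s : Set (Fin n → ℝ)) := by
  have := mem_hull_segS (i := i) hr (t := 0) (by simp [hr.le])
  simpa using this

lemma segS_subset_span (i : Fin n) (s : ℝ) :
    (segS i s : Set (Fin n → ℝ)) ⊆ (Submodule.span ℝ {uvec i} : Set (Fin n → ℝ)) := by
  rw [segS_coe]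
  rintro x (rfl | rfl)
  · exact neg_mem (Submodule.smul_mem _ _ (Submodule.subset_span rfl))
  · exact Submodule.smul_mem _ _ (Submodule.subset_span rfl)

lemma vectorSpan_le_span {s : Set (Fin n → ℝ)} {W : Submodule ℝ (Fin n → ℝ)}
    (h : s ⊆ (W : Set (Fin n → ℝ))) : vectorSpan ℝ s ≤ W := by
  rw [vectorSpan_def]
  refine Submodule.span_le.2 ?_
  rintro _ ⟨x, hx, y, hy, rfl⟩
  simp only [vsub_eq_sub]
  exact sub_mem (h hx) (h hy)

lemma uvec_mem_vectorSpan {i : Fin n} {s : ℝ} (hr : s ≠ 0) {V : Set (Fin n → ℝ)}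
    (h1 : -(s • uvec i) ∈ V) (h2 : s • uvec i ∈ V) : uvec i ∈ vectorSpan ℝ V := by
  have hm : s • uvec i -ᵥ -(s • uvec i) ∈ vectorSpan ℝ V := vsub_mem_vectorSpan ℝ h2 h1
  have he : s • uvec i -ᵥ -(s • uvec i) = (2 * s) • uvec i := by
    simp only [vsub_eq_sub]
    module
  rw [he] at hm
  have := Submodule.smul_mem _ (2 * s)⁻¹ hm
  rwa [smul_smul, inv_mul_cancel₀ (by positivity), one_smul] at this
  -- note : positivity may fail for ≠ 0; fix below if needed

lemma pdim_segS {i : Fin n} {s : ℝ} (hr : 0 < s) :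
    pdim (convexHull ℝ (segS i s : Set (Fin n → ℝ))) = 1 := by
  rw [pdim_hull]
  have hspan : vectorSpan ℝ (segS i s : Set (Fin n → ℝ)) = Submodule.span ℝ {uvec i} := by
    refine le_antisymm (vectorSpan_le_span (segS_subset_span i s)) ?_
    refine Submodule.span_le.2 ?_
    rintro _ rfl
    exact uvec_mem_vectorSpan hr.ne' (by rw [segS_coe]; exact Or.inl rfl)
      (by rw [segS_coe]; exact Or.inr rfl)
  rw [hspan]
  exact finrank_span_singleton (uvec_ne_zero i)

end Concrete

section Concrete2

open Metric Set

variable {n : ℕ}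

lemma zero_mem_intrinsic_segS {i : Fin n} {s : ℝ} (hr : 0 < s) :
    (0 : Fin n → ℝ) ∈ intrinsicInterior ℝ (convexHull ℝ (segS i s : Set (Fin n → ℝ))) := by
  refine mem_intrinsicInterior_of_exists_open (U := ball 0 s) isOpen_ball
    (by simpa using hr) (zero_mem_hull_segS hr) ?_
  intro v hv hvspan
  have hsp : v ∈ Submodule.span ℝ {uvec i} :=
    mem_span_of_mem_affineSpan_hull (zero_mem_hull_segS hr) (segS_subset_span i s) hvspan
  obtain ⟨t, rfl⟩ := Submodule.mem_span_singleton.1 hsp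
  have hti : |t| ≤ s := by
    have h1 : dist ((t • uvec i) i) ((0 : Fin n → ℝ) i) ≤ dist (t • uvec i) (0 : Fin n → ℝ) :=
      dist_le_pi_dist _ _ i
    rw [smul_uvec_apply_same] at h1
    simp only [Pi.zero_apply, Real.dist_eq, sub_zero] at h1
    have h2 : dist (t • uvec i) (0 : Fin n → ℝ) < s := mem_ball.1 hv
    linarith
  exact mem_hull_segS hr hti

noncomputable def quadS (i j : Fin n) (s : ℝ) : Finset (Fin n → ℝ) := segS i s ∪ segS j 1

lemma segS_subset_quadS₁ (i j : Fin n) (s : ℝ) :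
    (segS i s : Set (Fin n → ℝ)) ⊆ (quadS i j s : Set (Fin n → ℝ)) := by
  simp [quadS]

lemma segS_subset_quadS₂ (i j : Fin n) (s : ℝ) :
    (segS j 1 : Set (Fin n → ℝ)) ⊆ (quadS i j s : Set (Fin n → ℝ)) := by
  simp [quadS]

lemma zero_mem_hull_quadS {i j : Fin n} {s : ℝ} :
    (0 : Fin n → ℝ) ∈ convexHull ℝ (quadS i j s : Set (Fin n → ℝ)) :=
  convexHull_mono (segS_subset_quadS₂ i j s) (zero_mem_hull_segS one_pos)

lemma quadS_subset_span (i j : Fin n) (s : ℝ) :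
    (quadS i j s : Set (Fin n → ℝ)) ⊆
      (Submodule.span ℝ {uvec i, uvec j} : Set (Fin n → ℝ)) := by
  have h1 := (segS_subset_span i s).trans
    (SetLike.coe_subset_coe.2 (Submodule.span_mono (by simp : ({uvec i} : Set (Fin n → ℝ)) ⊆ {uvec i, uvec j})))
  have h2 := (segS_subset_span j 1).trans
    (SetLike.coe_subset_coe.2 (Submodule.span_mono (by simp : ({uvec j} : Set (Fin n → ℝ)) ⊆ {uvec i, uvec j})))
  intro x hx
  simp only [quadS, Finset.coe_union, Set.mem_union] at hx
  exact hx.elim (fun h => h1 h) fun h => h2 h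

lemma linindep_uvec {i j : Fin n} (hij : i ≠ j) :
    LinearIndependent ℝ ![uvec i, uvec j] := by
  rw [LinearIndependent.pair_iff]
  intro a b hab
  have hi := congrFun hab i
  have hj := congrFun hab j
  simp only [Pi.add_apply, Pi.zero_apply, smul_uvec_apply_same,
    smul_uvec_apply_ne hij, smul_uvec_apply_ne hij.symm] at hi hj
  constructor <;> linarith

lemma pdim_quadS {i j : Fin n} {s : ℝ} (hr : 0 < s) (hij : i ≠ j) :
    pdim (convexHull ℝ (quadS i j s : Set (Fin n → ℝ))) = 2 := by
  rw [pdim_hull]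
  have hspan : vectorSpan ℝ (quadS i j s : Set (Fin n → ℝ))
      = Submodule.span ℝ {uvec i, uvec j} := by
    refine le_antisymm (vectorSpan_le_span (quadS_subset_span i j s)) ?_
    refine Submodule.span_le.2 ?_
    rintro _ (rfl | rfl)
    · exact uvec_mem_vectorSpan hr.ne'
        (segS_subset_quadS₁ i j s (by rw [segS_coe]; exact Or.inl rfl))
        (segS_subset_quadS₁ i j s (by rw [segS_coe]; exact Or.inr rfl))
    · exact uvec_mem_vectorSpan one_ne_zero
        (segS_subset_quadS₂ i j s (by rw [segS_coe]; exact Or.inl rfl))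
        (segS_subset_quadS₂ i j s (by rw [segS_coe]; exact Or.inr rfl))
  rw [hspan]
  have hrange : Set.range ![uvec i, uvec j] = {uvec i, uvec j} := by
    simp [Matrix.range_cons, Matrix.range_empty]
    rw [Set.pair_comm]
  rw [← hrange, finrank_span_eq_card (linindep_uvec hij)]
  simp

end Concrete2

section Concrete3

open Metric Set Pointwise

variable {n : ℕ}

lemma zero_mem_intrinsic_quadS {i j : Fin n} {s : ℝ} (hr : 0 < s) (hij : i ≠ j) :
    (0 : Fin n → ℝ) ∈ intrinsicInterior ℝ (convexHull ℝ (quadS i j s : Set (Fin n → ℝ))) := by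
  set δ : ℝ := min s 1 / 2 with hδ
  have hδ0 : 0 < δ := by
    have : 0 < min s 1 := lt_min hr one_pos
    positivity
  refine mem_intrinsicInterior_of_exists_open (U := ball 0 δ) isOpen_ball
    (by simpa using hδ0) zero_mem_hull_quadS ?_
  intro v hv hvspan
  have hsp : v ∈ Submodule.span ℝ {uvec i, uvec j} :=
    mem_span_of_mem_affineSpan_hull zero_mem_hull_quadS (quadS_subset_span i j s) hvspan
  obtain ⟨a, b, rfl⟩ := Submodule.mem_span_pair.1 hsp
  have hdist : dist (a • uvec i + b • uvec j) (0 : Fin n → ℝ) < δ := mem_ball.1 hv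
  have hcoord : ∀ k : Fin n, |(a • uvec i + b • uvec j) k| < δ := by
    intro k
    have h1 := dist_le_pi_dist (a • uvec i + b • uvec j) (0 : Fin n → ℝ) k
    simp only [Pi.zero_apply, Real.dist_eq, sub_zero] at h1
    linarith
  have ha : |a| < δ := by
    have := hcoord i
    simpa [uvec, Pi.single_eq_same, Pi.single_eq_of_ne hij, Pi.single_eq_of_ne hij.symm]
      using this
  have hb : |b| < δ := by
    have := hcoord j
    simpa [uvec, Pi.single_eq_same, Pi.single_eq_of_ne hij, Pi.single_eq_of_ne hij.symm]
      using this
  have hmin_s : min s 1 ≤ s := min_le_left _ _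
  have hmin_1 : min s 1 ≤ 1 := min_le_right _ _
  have h2a : |2 * a| ≤ s := by
    rw [abs_mul, abs_two]
    nlinarith [abs_nonneg a]
  have h2b : |2 * b| ≤ 1 := by
    rw [abs_mul, abs_two]
    nlinarith [abs_nonneg b]
  have hm1 : (2 * a) • uvec i ∈ convexHull ℝ (quadS i j s : Set (Fin n → ℝ)) :=
    convexHull_mono (segS_subset_quadS₁ i j s) (mem_hull_segS hr h2a)
  have hm2 : (2 * b) • uvec j ∈ convexHull ℝ (quadS i j s : Set (Fin n → ℝ)) :=
    convexHull_mono (segS_subset_quadS₂ i j s) (mem_hull_segS one_pos h2b)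
  have hcomb := (convex_convexHull ℝ (quadS i j s : Set (Fin n → ℝ))) hm1 hm2
    (by norm_num : (0:ℝ) ≤ 1/2) (by norm_num : (0:ℝ) ≤ 1/2) (by norm_num)
  have heq : a • uvec i + b • uvec j
      = (1/2 : ℝ) • ((2 * a) • uvec i) + (1/2 : ℝ) • ((2 * b) • uvec j) := by
    module
  rw [heq]
  exact hcomb

lemma norm_le_of_mem_hull_segS {i : Fin n} {s : ℝ} (hr : 0 ≤ s) {x : Fin n → ℝ}
    (hx : x ∈ convexHull ℝ (segS i s : Set (Fin n → ℝ))) : ‖x‖ ≤ s := by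
  have hsub : convexHull ℝ (segS i s : Set (Fin n → ℝ)) ⊆ closedBall 0 s := by
    refine convexHull_min ?_ (convex_closedBall _ _)
    rw [segS_coe]
    rintro x (rfl | rfl)
    · rw [mem_closedBall, dist_eq_norm, sub_zero, norm_neg, norm_smul_uvec]
      simp [abs_of_nonneg hr]
    · rw [mem_closedBall, dist_eq_norm, sub_zero, norm_smul_uvec]
      simp [abs_of_nonneg hr]
  have := hsub hx
  rwa [mem_closedBall, dist_eq_norm, sub_zero] at this

lemma haus_segS_singleton {i : Fin n} {s : ℝ} (hr : 0 < s) :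
    hausdorffDist (convexHull ℝ (segS i s : Set (Fin n → ℝ))) ({0} : Set (Fin n → ℝ)) ≤ s := by
  refine hausdorffDist_le_of_mem_dist hr.le ?_ ?_
  · intro x hx
    exact ⟨0, rfl, by rw [dist_eq_norm, sub_zero]; exact norm_le_of_mem_hull_segS hr.le hx⟩
  · rintro y rfl
    exact ⟨0, zero_mem_hull_segS hr, by simp [hr.le]⟩

lemma haus_quadS_segS {i j : Fin n} {s : ℝ} (hr : 0 < s) :
    hausdorffDist (convexHull ℝ (quadS i j s : Set (Fin n → ℝ)))
      (convexHull ℝ (segS j 1 : Set (Fin n → ℝ))) ≤ s := by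
  set B := convexHull ℝ (segS j 1 : Set (Fin n → ℝ))
  refine hausdorffDist_le_of_mem_dist hr.le ?_ ?_
  · intro x hx
    have hsub : convexHull ℝ (quadS i j s : Set (Fin n → ℝ)) ⊆ B + closedBall (0 : Fin n → ℝ) s := by
      refine convexHull_min ?_ ((convex_convexHull ℝ _).add (convex_closedBall _ _))
      intro z hz
      simp only [quadS, Finset.coe_union, Set.mem_union] at hz
      rcases hz with hz | hz
      · have hz' : z ∈ closedBall (0 : Fin n → ℝ) s := by
          rw [mem_closedBall, dist_eq_norm, sub_zero]
          exact norm_le_of_mem_hull_segS hr.le (subset_convexHull ℝ _ hz)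
        have h0B : (0 : Fin n → ℝ) ∈ B := zero_mem_hull_segS one_pos
        have : (0 : Fin n → ℝ) + z ∈ B + closedBall (0 : Fin n → ℝ) s := add_mem_add h0B hz'
        simpa using this
      · have hzB : z ∈ B := subset_convexHull ℝ _ hz
        have h0b : (0 : Fin n → ℝ) ∈ closedBall (0 : Fin n → ℝ) s := by simp [hr.le]
        have : z + (0 : Fin n → ℝ) ∈ B + closedBall (0 : Fin n → ℝ) s := add_mem_add hzB h0b
        simpa using this
    obtain ⟨y, hy, z, hz, rfl⟩ := hsub hx
    refine ⟨y, hy, ?_⟩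
    rw [mem_closedBall, dist_eq_norm, sub_zero] at hz
    rw [dist_eq_norm]
    simpa using hz
  · intro y hy
    refine ⟨y, convexHull_mono (segS_subset_quadS₂ i j s) hy, by simp [hr.le]⟩

end Concrete3

section Main

open Metric Set

lemma pdim_singleton_zero {n : ℕ} : pdim ({0} : Set (Fin n → ℝ)) = 0 := by
  unfold pdim
  rw [direction_affineSpan, vectorSpan_singleton]
  exact finrank_bot ℝ _

theorem usc_iff_zero (n : ℕ) (hn : 2 ≤ n) (c : ℝ) :
    UpperSemicontinuous (fun P : PolytopeSpace0 n =>
      c * (if (0 : Fin n → ℝ) ∈ intrinsicInterior ℝ (P.1 : Set (Fin n → ℝ)) then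
        (-1 : ℝ) ^ pdim (P.1 : Set (Fin n → ℝ)) else 0)) ↔ c = 0 := by
  constructor
  · intro h
    set f : PolytopeSpace0 n → ℝ := fun P =>
      c * (if (0 : Fin n → ℝ) ∈ intrinsicInterior ℝ (P.1 : Set (Fin n → ℝ)) then
        (-1 : ℝ) ^ pdim (P.1 : Set (Fin n → ℝ)) else 0) with hf
    by_contra hc
    have h0n : 0 < n := by omega
    have h1n : 1 < n := by omega
    set i₀ : Fin n := ⟨0, h0n⟩ with hi₀
    set i₁ : Fin n := ⟨1, h1n⟩ with hi₁
    have hij : i₀ ≠ i₁ := by simp [hi₀, hi₁, Fin.ext_iff]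
    rcases lt_or_gt_of_ne hc with hneg | hpos
    · -- c < 0 : use {0} and small segments
      have h00 : (0 : Fin n → ℝ) ∈
          convexHull ℝ (({0} : Finset (Fin n → ℝ)) : Set (Fin n → ℝ)) := by
        simp
      set P₀ : PolytopeSpace0 n := mkP n {0} (Finset.singleton_nonempty _) h00 with hP₀
      have hset : (P₀.1 : Set (Fin n → ℝ)) = ({0} : Set (Fin n → ℝ)) := by
        rw [hP₀, mkP_coe]
        simp
      have hI₀ : (0 : Fin n → ℝ) ∈ intrinsicInterior ℝ (P₀.1 : Set (Fin n → ℝ)) := by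
        rw [hset, intrinsicInterior_singleton]
        rfl
      have hv₀ : f P₀ = c := by
        rw [hf]
        simp only
        rw [if_pos hI₀, hset, pdim_singleton_zero, pow_zero, mul_one]
      have hev := h P₀ 0 (by show f P₀ < 0; rw [hv₀]; exact hneg)
      rw [Metric.eventually_nhds_iff] at hev
      obtain ⟨ε, hε, hball⟩ := hev
      set s : ℝ := min (ε / 2) 1 with hs
      have hs0 : 0 < s := lt_min (by linarith) one_pos
      have hsε : s < ε := lt_of_le_of_lt (min_le_left _ _) (by linarith)
      set Q : PolytopeSpace0 n := mkP n (segS i₀ s) (by unfold segS; exact Finset.insert_nonempty _ _)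
        (zero_mem_hull_segS hs0) with hQ
      have hQset : (Q.1 : Set (Fin n → ℝ)) = convexHull ℝ (segS i₀ s : Set (Fin n → ℝ)) := by
        rw [hQ, mkP_coe]
      have hdist : dist Q P₀ < ε := by
        have : dist Q P₀ = hausdorffDist (Q.1 : Set (Fin n → ℝ)) (P₀.1 : Set (Fin n → ℝ)) := rfl
        rw [this, hQset, hset]
        exact lt_of_le_of_lt (haus_segS_singleton hs0) hsε
      have hfQ : f Q = -c := by
        rw [hf]
        simp only
        rw [if_pos (by rw [hQset]; exact zero_mem_intrinsic_segS hs0), hQset, pdim_segS hs0,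
          pow_one, mul_neg_one]
      have : f Q < 0 := hball hdist
      rw [hfQ] at this
      linarith
    · -- c > 0 : use the segment [-e₂, e₂] and thin quadrilaterals
      set P₁ : PolytopeSpace0 n := mkP n (segS i₁ 1) (by unfold segS; exact Finset.insert_nonempty _ _)
        (zero_mem_hull_segS one_pos) with hP₁
      have hset : (P₁.1 : Set (Fin n → ℝ)) = convexHull ℝ (segS i₁ 1 : Set (Fin n → ℝ)) := by
        rw [hP₁, mkP_coe]
      have hv₁ : f P₁ = -c := by
        rw [hf]
        simp only
        rw [if_pos (by rw [hset]; exact zero_mem_intrinsic_segS one_pos), hset, pdim_segS one_pos,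
          pow_one, mul_neg_one]
      have hev := h P₁ 0 (by show f P₁ < 0; rw [hv₁]; linarith)
      rw [Metric.eventually_nhds_iff] at hev
      obtain ⟨ε, hε, hball⟩ := hev
      set s : ℝ := min (ε / 2) 1 with hs
      have hs0 : 0 < s := lt_min (by linarith) one_pos
      have hsε : s < ε := lt_of_le_of_lt (min_le_left _ _) (by linarith)
      have hQne : (quadS i₀ i₁ s).Nonempty := by
        rw [quadS]; exact Finset.Nonempty.inl (by rw [segS]; exact Finset.insert_nonempty _ _)
      set Q : PolytopeSpace0 n := mkP n (quadS i₀ i₁ s) hQne zero_mem_hull_quadS with hQ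
      have hQset : (Q.1 : Set (Fin n → ℝ)) = convexHull ℝ (quadS i₀ i₁ s : Set (Fin n → ℝ)) := by
        rw [hQ, mkP_coe]
      have hdist : dist Q P₁ < ε := by
        have : dist Q P₁ = hausdorffDist (Q.1 : Set (Fin n → ℝ)) (P₁.1 : Set (Fin n → ℝ)) := rfl
        rw [this, hQset, hset]
        exact lt_of_le_of_lt (haus_quadS_segS hs0) hsε
      have hfQ : f Q = c := by
        rw [hf]
        simp only
        rw [if_pos (by rw [hQset]; exact zero_mem_intrinsic_quadS hs0 hij), hQset,
          pdim_quadS hs0 hij]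
        norm_num
      have : f Q < 0 := hball hdist
      rw [hfQ] at this
      linarith
  · rintro rfl
    simp only [zero_mul]
    exact upperSemicontinuous_const

end Main
end

section
/- Let Ψ' be an SL(n) invariant valuation on all convex polytopes in ℝⁿ that vanishes on polytopes containing the origin and on all polytopes of dimension at most k-1, where k ≤ n-2. Then Ψ' vanishes on every k-dimensional simplex T with 0 ∉ aff T. -/
open MeasureTheory Classical

/-- `Ψ` is a valuation on the set of all convex polytopes in `ℝⁿ`. -/
def IsValuation {n : ℕ} (Ψ : Set (Fin n → ℝ) → ℝ) : Prop :=
  ∀ P Q : Set (Fin n → ℝ), IsPolytope P → IsPolytope Q → Convex ℝ (P ∪ Q) →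
    Ψ P + Ψ Q = Ψ (P ∪ Q) + Ψ (P ∩ Q)

/-- `Ψ` is `SL(n)` invariant on convex polytopes. -/
def IsSLInvariant {n : ℕ} (Ψ : Set (Fin n → ℝ) → ℝ) : Prop :=
  ∀ A : Matrix.SpecialLinearGroup (Fin n) ℝ, ∀ P : Set (Fin n → ℝ), IsPolytope P →
    Ψ (⇑(Matrix.toLin' (A : Matrix (Fin n) (Fin n) ℝ)) '' P) = Ψ P

/-! ### Auxiliary lemmas -/

lemma sum_eq_of_pair {m : ℕ} {α : Type*} [AddCommMonoid α] (F G : Fin m → α) (i j : Fin m)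
    (hij : i ≠ j) (hFG : ∀ l, l ≠ i → l ≠ j → F l = G l)
    (hsum : F i + F j = G i + G j) : ∑ l, F l = ∑ l, G l := by
  classical
  have hjmem : j ∈ Finset.univ.erase i := Finset.mem_erase.2 ⟨hij.symm, Finset.mem_univ j⟩
  rw [← Finset.add_sum_erase _ F (Finset.mem_univ i), ← Finset.add_sum_erase _ F hjmem,
      ← Finset.add_sum_erase _ G (Finset.mem_univ i), ← Finset.add_sum_erase _ G hjmem,
      ← add_assoc, ← add_assoc, hsum]
  congr 1
  refine Finset.sum_congr rfl fun l hl => ?_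
  have h1 : l ≠ j := (Finset.mem_erase.1 hl).1
  have h2 : l ≠ i := (Finset.mem_erase.1 (Finset.mem_erase.1 hl).2).1
  exact hFG l h2 h1

lemma mem_convexHull_range_iff {n m : ℕ} (v : Fin m → (Fin n → ℝ)) (x : Fin n → ℝ) :
    x ∈ convexHull ℝ (Set.range v) ↔
      ∃ w : Fin m → ℝ, (∀ i, 0 ≤ w i) ∧ ∑ i, w i = 1 ∧ ∑ i, w i • v i = x := by
  rw [convexHull_range_eq_exists_affineCombination]
  constructor
  · rintro ⟨s, w, h0, h1, rfl⟩
    refine ⟨fun i => if i ∈ s then w i else 0, fun i => ?_, ?_, ?_⟩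
    · dsimp only
      split
      · exact h0 _ ‹_›
      · exact le_refl 0
    · dsimp only
      rw [Finset.sum_ite_mem, Finset.univ_inter, h1]
    · dsimp only
      have heach : ∀ i, (if i ∈ s then w i else 0) • v i = if i ∈ s then w i • v i else 0 := by
        intro i; split <;> simp
      rw [Finset.sum_congr rfl fun i _ => heach i, Finset.sum_ite_mem, Finset.univ_inter]
      exact (Finset.affineCombination_eq_linear_combination s v w h1).symm
  · rintro ⟨w, h0, h1, rfl⟩
    exact Set.mem_setOf_eq ▸ ⟨Finset.univ, w, fun i _ => h0 i, h1,
      Finset.affineCombination_eq_linear_combination _ v w h1⟩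

lemma isPolytope_convexHull_range {n m : ℕ} (hm : 0 < m) (v : Fin m → (Fin n → ℝ)) :
    IsPolytope (convexHull ℝ (Set.range v)) := by
  refine ⟨Finset.univ.image v, ⟨v ⟨0, hm⟩, Finset.mem_image_of_mem v (Finset.mem_univ _)⟩, ?_⟩
  rw [Finset.coe_image, Finset.coe_univ, Set.image_univ]

/-- Any `k`-simplex whose vertices form a linearly independent family has the same `Ψ'` value
as the standard one. -/
lemma psi_const (n k : ℕ) (hkn : k + 1 ≤ n) (hlt : k + 1 < n)
    (Ψ' : Set (Fin n → ℝ) → ℝ) (hinv : IsSLInvariant Ψ')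
    (v : Fin (k + 1) → (Fin n → ℝ)) (hv : LinearIndependent ℝ v) :
    Ψ' (convexHull ℝ (Set.range v)) =
      Ψ' (convexHull ℝ (Set.range fun i : Fin (k + 1) => Pi.single (Fin.castLE hkn i) (1 : ℝ))) := by
  classical
  set W : Submodule ℝ (Fin n → ℝ) := Submodule.span ℝ (Set.range v) with hW
  obtain ⟨W', hcompl⟩ := Submodule.exists_isCompl W
  set d : ℕ := n - (k + 1) with hdd
  have hfr : Module.finrank ℝ W = k + 1 := by
    rw [hW, finrank_span_eq_card hv, Fintype.card_fin]
  have hfr' : Module.finrank ℝ W' = d := by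
    have := Submodule.finrank_add_eq_of_isCompl hcompl
    rw [hfr, Module.finrank_fintype_fun_eq_card, Fintype.card_fin] at this
    omega
  have hd1 : 0 < d := by omega
  set bW : Module.Basis (Fin (k + 1)) ℝ W := Module.Basis.span hv with hbW
  set bW' : Module.Basis (Fin d) ℝ W' := Module.finBasisOfFinrankEq ℝ W' hfr' with hbW'
  set B : Module.Basis (Fin (k + 1) ⊕ Fin d) ℝ (Fin n → ℝ) :=
    (bW.prod bW').map (Submodule.prodEquivOfIsCompl W W' hcompl) with hB
  have hsum : (k + 1) + d = n := by omega
  set σ : Fin n ≃ (Fin (k + 1) ⊕ Fin d) := (finCongr hsum.symm).trans finSumFinEquiv.symm with hσ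
  set C : Module.Basis (Fin n) ℝ (Fin n → ℝ) := B.reindex σ.symm with hC
  have hCapp : ∀ j, C j = B (σ j) := by
    intro j; rw [hC, Module.Basis.reindex_apply, Equiv.symm_symm]
  have hσemb : ∀ i : Fin (k + 1), σ (Fin.castLE hkn i) = Sum.inl i := by
    intro i
    have : (finCongr hsum.symm) (Fin.castLE hkn i) = Fin.castAdd d i := by
      ext; simp
    rw [hσ, Equiv.trans_apply, this, finSumFinEquiv_symm_apply_castAdd]
  have hCemb : ∀ i : Fin (k + 1), C (Fin.castLE hkn i) = v i := by
    intro i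
    rw [hCapp, hσemb, hB, Module.Basis.map_apply, Module.Basis.prod_apply]
    simp only [Sum.elim_inl, Function.comp_apply, LinearMap.inl_apply,
      Submodule.coe_prodEquivOfIsCompl']
    simp only [ZeroMemClass.coe_zero, add_zero]
    exact congrArg Subtype.val (Module.Basis.span_apply hv i)
  set j₀ : Fin n := σ.symm (Sum.inr ⟨0, hd1⟩) with hj₀
  have hembne : ∀ i : Fin (k + 1), Fin.castLE hkn i ≠ j₀ := by
    intro i h
    have := congrArg σ h
    rw [hσemb, hj₀, Equiv.apply_symm_apply] at this
    exact Sum.inl_ne_inr this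
  set e : Module.Basis (Fin n) ℝ (Fin n → ℝ) := Pi.basisFun ℝ (Fin n) with he
  set δ : ℝ := e.det ⇑C with hδ
  have hδ0 : δ ≠ 0 := (e.isUnit_det C).ne_zero
  set cfam : Fin n → (Fin n → ℝ) := Function.update (⇑C) j₀ (δ⁻¹ • C j₀) with hcfam
  set M : Matrix (Fin n) (Fin n) ℝ := e.toMatrix cfam with hM
  have hdet : M.det = 1 := by
    rw [hM, ← Module.Basis.det_apply, hcfam]
    rw [AlternatingMap.map_update_smul, Function.update_eq_self]
    rw [← hδ, smul_eq_mul, inv_mul_cancel₀ hδ0]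
  have happly : ∀ i : Fin (k + 1),
      Matrix.toLin' M (Pi.single (Fin.castLE hkn i) (1 : ℝ)) = v i := by
    intro i
    rw [Matrix.toLin'_apply, Matrix.mulVec_single_one]
    have h1 : M.transpose (Fin.castLE hkn i) = cfam (Fin.castLE hkn i) := by
      ext j
      rw [Matrix.transpose_apply, hM, Module.Basis.toMatrix_apply, he, Pi.basisFun_repr]
    rw [show M.col (Fin.castLE hkn i) = M.transpose (Fin.castLE hkn i) from rfl,
      h1, hcfam, Function.update_of_ne (hembne i), hCemb]
  have hpoly := isPolytope_convexHull_range (n := n) (Nat.succ_pos k)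
    (fun i : Fin (k + 1) => Pi.single (Fin.castLE hkn i) (1 : ℝ))
  set A : Matrix.SpecialLinearGroup (Fin n) ℝ := ⟨M, hdet⟩ with hA
  have := hinv A _ hpoly
  have himg : ⇑(Matrix.toLin' M) ''
      (convexHull ℝ (Set.range fun i : Fin (k + 1) => Pi.single (Fin.castLE hkn i) (1 : ℝ)))
      = convexHull ℝ (Set.range v) := by
    have hfun : (⇑(Matrix.toLin' M) ∘ fun i : Fin (k + 1) => Pi.single (Fin.castLE hkn i) (1 : ℝ))
        = v := funext fun i => happly i
    rw [(Matrix.toLin' M).image_convexHull, ← Set.range_comp, hfun]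
  have hcoe : (A : Matrix (Fin n) (Fin n) ℝ) = M := rfl
  rw [hcoe, himg] at this
  exact this

theorem vanishes_on_k_simplices (n k : ℕ) (hn : 3 ≤ n) (hk1 : 1 ≤ k) (hk2 : k ≤ n - 2)
    (Ψ' : Set (Fin n → ℝ) → ℝ) (hval : IsValuation Ψ') (hinv : IsSLInvariant Ψ')
    (hvan0 : ∀ P : Set (Fin n → ℝ), IsPolytope P → (0 : Fin n → ℝ) ∈ P → Ψ' P = 0)
    (hvanlow : ∀ P : Set (Fin n → ℝ), IsPolytope P → pdim P ≤ k - 1 → Ψ' P = 0) :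
    ∀ v : Fin (k + 1) → (Fin n → ℝ), AffineIndependent ℝ v →
      (0 : Fin n → ℝ) ∉ affineSpan ℝ (Set.range v) →
      Ψ' (convexHull ℝ (Set.range v)) = 0 := by
  intro v hvaff h0span
  have hkn : k + 1 ≤ n := by omega
  have hlt : k + 1 < n := by omega
  haveI : NeZero k := ⟨by omega⟩
  set f : Fin (k + 1) → (Fin n → ℝ) := fun i => Pi.single (Fin.castLE hkn i) (1 : ℝ) with hf
  have hfli : LinearIndependent ℝ f := by
    have h2 := (Pi.basisFun ℝ (Fin n)).linearIndependent.comp (Fin.castLE hkn)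
      (Fin.castLE_injective hkn)
    simpa [hf, Function.comp_def] using h2
  have hfaff : AffineIndependent ℝ f :=
    affineIndependent_iff.2 fun s w _ hs => linearIndependent_iff'.1 hfli s w hs
  -- the vertex family is linearly independent
  have hvli : LinearIndependent ℝ v := by
    rw [Fintype.linearIndependent_iff]
    intro cc hcc
    by_cases hs : ∑ i, cc i = 0
    · exact fun i => hvaff.eq_zero_of_sum_eq_zero hs hcc i (Finset.mem_univ i)
    · exfalso
      apply h0span
      have h1 : ∑ i, (∑ j, cc j)⁻¹ * cc i = 1 := by
        rw [← Finset.mul_sum, inv_mul_cancel₀ hs]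
      have h2 : Finset.univ.affineCombination ℝ v (fun i => (∑ j, cc j)⁻¹ * cc i) = 0 := by
        rw [Finset.affineCombination_eq_linear_combination _ _ _ h1]
        calc ∑ i, ((∑ j, cc j)⁻¹ * cc i) • v i
            = (∑ j, cc j)⁻¹ • ∑ i, cc i • v i := by
              rw [Finset.smul_sum]
              exact Finset.sum_congr rfl fun i _ => (mul_smul _ _ _)
          _ = 0 := by rw [hcc, smul_zero]
      rw [← h2]
      exact affineCombination_mem_affineSpan h1 v
  set i0 : Fin (k + 1) := 0 with hi0
  set i1 : Fin (k + 1) := 1 with hi1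
  have hval1 : (i1 : ℕ) = 1 := by
    rw [hi1]
    simp [Fin.val_one', Nat.mod_eq_of_lt (by omega : 1 < k + 1)]
  have hne : i0 ≠ i1 := by
    intro hc
    have := congrArg Fin.val hc
    rw [hval1] at this
    simp [hi0] at this
  set m₀ : Fin n → ℝ := (1/2 : ℝ) • (f i0 + f i1) with hm₀
  set g : Fin (k + 1) → (Fin n → ℝ) := Function.update f i1 m₀ with hg
  set hfam : Fin (k + 1) → (Fin n → ℝ) := Function.update f i0 m₀ with hh
  have hgi0 : g i0 = f i0 := Function.update_of_ne hne _ _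
  have hgi1 : g i1 = m₀ := Function.update_self _ _ _
  have hhi0 : hfam i0 = m₀ := Function.update_self _ _ _
  have hhi1 : hfam i1 = f i1 := Function.update_of_ne hne.symm _ _
  have hgo : ∀ l, l ≠ i0 → l ≠ i1 → g l = f l := fun l _ h2 => Function.update_of_ne h2 _ _
  have hho : ∀ l, l ≠ i0 → l ≠ i1 → hfam l = f l := fun l h1 _ => Function.update_of_ne h1 _ _
  -- linear independence of the two halves' vertex families
  have hgli : LinearIndependent ℝ g := by
    rw [Fintype.linearIndependent_iff]
    intro cc hcc
    set dd : Fin (k+1) → ℝ :=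
      fun l => if l = i0 then cc i0 + cc i1 / 2 else if l = i1 then cc i1 / 2 else cc l with hdd
    have hsum : ∑ l, dd l • f l = 0 := by
      rw [← hcc]
      refine sum_eq_of_pair _ _ i0 i1 hne (fun l h1 h2 => ?_) ?_
      · rw [hdd]
        dsimp only
        rw [if_neg h1, if_neg h2, hgo l h1 h2]
      · rw [hdd]
        dsimp only
        rw [if_pos rfl, if_neg hne.symm, if_pos rfl, hgi0, hgi1, hm₀]
        module
    have hz := Fintype.linearIndependent_iff.1 hfli dd hsum
    have h1 := hz i0
    have h2 := hz i1
    rw [hdd] at h1 h2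
    dsimp only at h1 h2
    rw [if_pos rfl] at h1
    rw [if_neg hne.symm, if_pos rfl] at h2
    intro i
    rcases eq_or_ne i i0 with rfl | hi0'
    · linarith
    rcases eq_or_ne i i1 with rfl | hi1'
    · linarith
    · have h3 := hz i
      rw [hdd] at h3
      dsimp only at h3
      rwa [if_neg hi0', if_neg hi1'] at h3
  have hhli : LinearIndependent ℝ hfam := by
    rw [Fintype.linearIndependent_iff]
    intro cc hcc
    set dd : Fin (k+1) → ℝ :=
      fun l => if l = i0 then cc i0 / 2 else if l = i1 then cc i0 / 2 + cc i1 else cc l with hdd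
    have hsum : ∑ l, dd l • f l = 0 := by
      rw [← hcc]
      refine sum_eq_of_pair _ _ i0 i1 hne (fun l h1 h2 => ?_) ?_
      · rw [hdd]
        dsimp only
        rw [if_neg h1, if_neg h2, hho l h1 h2]
      · rw [hdd]
        dsimp only
        rw [if_pos rfl, if_neg hne.symm, if_pos rfl, hhi0, hhi1, hm₀]
        module
    have hz := Fintype.linearIndependent_iff.1 hfli dd hsum
    have h1 := hz i0
    have h2 := hz i1
    rw [hdd] at h1 h2
    dsimp only at h1 h2
    rw [if_pos rfl] at h1
    rw [if_neg hne.symm, if_pos rfl] at h2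
    intro i
    rcases eq_or_ne i i0 with rfl | hi0'
    · linarith
    rcases eq_or_ne i i1 with rfl | hi1'
    · linarith
    · have h3 := hz i
      rw [hdd] at h3
      dsimp only at h3
      rwa [if_neg hi0', if_neg hi1'] at h3
  -- the union is the whole simplex
  have hmem : m₀ ∈ convexHull ℝ (Set.range f) := by
    have h0 : f i0 ∈ convexHull ℝ (Set.range f) := subset_convexHull ℝ _ ⟨i0, rfl⟩
    have h1 : f i1 ∈ convexHull ℝ (Set.range f) := subset_convexHull ℝ _ ⟨i1, rfl⟩
    have h2 := (convex_convexHull ℝ (Set.range f)) h0 h1 (by norm_num : (0:ℝ) ≤ 1/2)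
      (by norm_num : (0:ℝ) ≤ 1/2) (by norm_num : (1:ℝ)/2 + 1/2 = 1)
    rw [hm₀]
    convert h2 using 1
    module
  have hunion : convexHull ℝ (Set.range g) ∪ convexHull ℝ (Set.range hfam)
      = convexHull ℝ (Set.range f) := by
    apply Set.Subset.antisymm
    · apply Set.union_subset
      · refine convexHull_min ?_ (convex_convexHull ℝ _)
        rintro x ⟨i, rfl⟩
        rcases eq_or_ne i i1 with rfl | his
        · rw [hgi1]; exact hmem
        · rw [hg, Function.update_of_ne his]
          exact subset_convexHull ℝ _ ⟨i, rfl⟩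
      · refine convexHull_min ?_ (convex_convexHull ℝ _)
        rintro x ⟨i, rfl⟩
        rcases eq_or_ne i i0 with rfl | his
        · rw [hhi0]; exact hmem
        · rw [hh, Function.update_of_ne his]
          exact subset_convexHull ℝ _ ⟨i, rfl⟩
    · intro x hx
      rw [mem_convexHull_range_iff] at hx
      obtain ⟨w, hw0, hw1, hwx⟩ := hx
      rcases le_total (w i1) (w i0) with hcase | hcase
      · left
        rw [mem_convexHull_range_iff]
        refine ⟨fun l => if l = i0 then w i0 - w i1 else if l = i1 then 2 * w i1 else w l,
          fun l => ?_, ?_, ?_⟩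
        · dsimp only
          split_ifs with ha hb
          · linarith
          · linarith [hw0 i1]
          · exact hw0 l
        · refine Eq.trans (sum_eq_of_pair _ w i0 i1 hne (fun l h1 h2 => ?_) ?_) hw1
          · rw [if_neg h1, if_neg h2]
          · rw [if_pos rfl, if_neg hne.symm, if_pos rfl]; ring
        · refine Eq.trans (sum_eq_of_pair _ (fun l => w l • f l) i0 i1 hne
            (fun l h1 h2 => ?_) ?_) hwx
          · dsimp only; rw [if_neg h1, if_neg h2, hgo l h1 h2]
          · dsimp only
            rw [if_pos rfl, if_neg hne.symm, if_pos rfl, hgi0, hgi1, hm₀]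
            module
      · right
        rw [mem_convexHull_range_iff]
        refine ⟨fun l => if l = i0 then 2 * w i0 else if l = i1 then w i1 - w i0 else w l,
          fun l => ?_, ?_, ?_⟩
        · dsimp only
          split_ifs with ha hb
          · linarith [hw0 i0]
          · linarith
          · exact hw0 l
        · refine Eq.trans (sum_eq_of_pair _ w i0 i1 hne (fun l h1 h2 => ?_) ?_) hw1
          · rw [if_neg h1, if_neg h2]
          · rw [if_pos rfl, if_neg hne.symm, if_pos rfl]; ring
        · refine Eq.trans (sum_eq_of_pair _ (fun l => w l • f l) i0 i1 hne
            (fun l h1 h2 => ?_) ?_) hwx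
          · dsimp only; rw [if_neg h1, if_neg h2, hho l h1 h2]
          · dsimp only
            rw [if_pos rfl, if_neg hne.symm, if_pos rfl, hhi0, hhi1, hm₀]
            module
  -- the intersection is a (k-1)-simplex
  set p : Fin k → (Fin n → ℝ) := g ∘ Fin.succ with hp
  have hsuccne0 : ∀ i : Fin k, Fin.succ i ≠ i0 := fun i => Fin.succ_ne_zero i
  have hsucc_zero : Fin.succ (0 : Fin k) = i1 := by
    ext
    rw [hval1, Fin.val_succ]
    simp
  have hsucc_ne1 : ∀ i : Fin k, i ≠ 0 → Fin.succ i ≠ i1 := by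
    intro i hi hc
    have := congrArg Fin.val hc
    rw [hval1, Fin.val_succ] at this
    have : (i : ℕ) = 0 := by omega
    exact hi (Fin.ext this)
  have hinter : convexHull ℝ (Set.range g) ∩ convexHull ℝ (Set.range hfam)
      = convexHull ℝ (Set.range p) := by
    apply Set.Subset.antisymm
    · rintro x ⟨hxg, hxh⟩
      rw [mem_convexHull_range_iff] at hxg hxh
      obtain ⟨u, hu0, hu1, hux⟩ := hxg
      obtain ⟨t, ht0, ht1, htx⟩ := hxh
      set du : Fin (k+1) → ℝ :=
        fun l => if l = i0 then u i0 + u i1 / 2 else if l = i1 then u i1 / 2 else u l with hdu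
      set dt : Fin (k+1) → ℝ :=
        fun l => if l = i0 then t i0 / 2 else if l = i1 then t i0 / 2 + t i1 else t l with hdt
      have hdux : ∑ l, du l • f l = x := by
        refine Eq.trans (sum_eq_of_pair _ (fun l => u l • g l) i0 i1 hne
          (fun l h1 h2 => ?_) ?_) hux
        · rw [hdu]; dsimp only; rw [if_neg h1, if_neg h2, hgo l h1 h2]
        · rw [hdu]; dsimp only
          rw [if_pos rfl, if_neg hne.symm, if_pos rfl, hgi0, hgi1, hm₀]
          module
      have hdtx : ∑ l, dt l • f l = x := by
        refine Eq.trans (sum_eq_of_pair _ (fun l => t l • hfam l) i0 i1 hne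
          (fun l h1 h2 => ?_) ?_) htx
        · rw [hdt]; dsimp only; rw [if_neg h1, if_neg h2, hho l h1 h2]
        · rw [hdt]; dsimp only
          rw [if_pos rfl, if_neg hne.symm, if_pos rfl, hhi0, hhi1, hm₀]
          module
      have hdusum : ∑ l, du l = 1 := by
        refine Eq.trans (sum_eq_of_pair _ u i0 i1 hne (fun l h1 h2 => ?_) ?_) hu1
        · rw [hdu]; dsimp only; rw [if_neg h1, if_neg h2]
        · rw [hdu]; dsimp only; rw [if_pos rfl, if_neg hne.symm, if_pos rfl]; ring
      have hdtsum : ∑ l, dt l = 1 := by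
        refine Eq.trans (sum_eq_of_pair _ t i0 i1 hne (fun l h1 h2 => ?_) ?_) ht1
        · rw [hdt]; dsimp only; rw [if_neg h1, if_neg h2]
        · rw [hdt]; dsimp only; rw [if_pos rfl, if_neg hne.symm, if_pos rfl]; ring
      have heqw := hfaff.eq_of_sum_eq_sum (s := Finset.univ) (w₁ := du) (w₂ := dt)
        (hdusum.trans hdtsum.symm) (hdux.trans hdtx.symm)
      have e0 := heqw i0 (Finset.mem_univ i0)
      have e1 := heqw i1 (Finset.mem_univ i1)
      rw [hdu, hdt] at e0 e1
      dsimp only at e0 e1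
      rw [if_pos rfl, if_pos rfl] at e0
      rw [if_neg hne.symm, if_neg hne.symm, if_pos rfl, if_pos rfl] at e1
      have hu00 : u i0 = 0 := by linarith [hu0 i0, ht0 i1]
      rw [mem_convexHull_range_iff]
      have hu00' : u (0 : Fin (k + 1)) = 0 := hu00
      refine ⟨fun i => u (Fin.succ i), fun i => hu0 _, ?_, ?_⟩
      · rw [← hu1, Fin.sum_univ_succ, hu00', zero_add]
      · rw [← hux, Fin.sum_univ_succ, hu00', zero_smul, zero_add]
        exact Finset.sum_congr rfl fun i _ => rfl
    · refine convexHull_min ?_ ((convex_convexHull ℝ _).inter (convex_convexHull ℝ _))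
      rintro x ⟨i, rfl⟩
      constructor
      · exact subset_convexHull ℝ _ ⟨Fin.succ i, rfl⟩
      · rcases eq_or_ne i 0 with rfl | hi'
        · have : p 0 = hfam i0 := by
            rw [hp, Function.comp_apply, hsucc_zero, hgi1, hhi0]
          rw [this]
          exact subset_convexHull ℝ _ ⟨i0, rfl⟩
        · have : p i = hfam (Fin.succ i) := by
            rw [hp, Function.comp_apply, hgo _ (hsuccne0 i) (hsucc_ne1 i hi'),
              hho _ (hsuccne0 i) (hsucc_ne1 i hi')]
          rw [this]
          exact subset_convexHull ℝ _ ⟨Fin.succ i, rfl⟩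
  have hpd : pdim (convexHull ℝ (Set.range p)) ≤ k - 1 := by
    show Module.finrank ℝ (affineSpan ℝ (convexHull ℝ (Set.range p))).direction ≤ k - 1
    rw [affineSpan_convexHull, direction_affineSpan]
    exact finrank_vectorSpan_range_le ℝ p (by rw [Fintype.card_fin]; omega)
  -- put everything together
  have hpolyg := isPolytope_convexHull_range (Nat.succ_pos k) g
  have hpolyh := isPolytope_convexHull_range (Nat.succ_pos k) hfam
  have hpolyp := isPolytope_convexHull_range (by omega : 0 < k) p
  have hvalgh := hval _ _ hpolyg hpolyh (by rw [hunion]; exact convex_convexHull ℝ _)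
  rw [hunion, hinter] at hvalgh
  have hΨp : Ψ' (convexHull ℝ (Set.range p)) = 0 := hvanlow _ hpolyp hpd
  have hg' := psi_const n k hkn hlt Ψ' hinv g hgli
  have hh' := psi_const n k hkn hlt Ψ' hinv hfam hhli
  have hv' := psi_const n k hkn hlt Ψ' hinv v hvli
  rw [← hf] at hg' hh' hv'
  rw [hg', hh', hΨp] at hvalgh
  rw [hv']
  linarith
end
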